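/- arXiv:1111.7146 — 6 statements merged into one kernel-verified Lean document; each statement's English description precedes it below -/
import Mathlib

section
/- Let P be a discrete Borel probability measure on ℝ and let η ∈ [0,∞) be such that whenever x, y ∈ ℝ satisfy 0 < |x − y| < η, at least one of P({x}), P({y}) vanishes. Then for every s ∈ [1,∞), η · β_s(P) ≤ 2 · β_{s+1}(P). -/
open MeasureTheory ProbabilityTheory Real Filter Set ENNReal
open scoped Classical

noncomputable def mu (P : Measure ℝ) : ℝ := ∫ x, x ∂P

/-- The absolute central moment `β_s(P) ∈ [0,∞]`, set to `∞` when the first absolute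
moment of `P` is infinite. -/

noncomputable def betaE (s : ℝ) (P : Measure ℝ) : ℝ≥0∞ :=
  if Integrable (fun x : ℝ => x) P then ∫⁻ x, ENNReal.ofReal (|x - mu P| ^ s) ∂P else ∞

/-- A measure on `ℝ` is discrete if it is a (countable) sum of point masses, i.e. the
measure of every (Borel) set is the sum of the masses of its points. -/
def IsDiscreteMeasureR (P : Measure ℝ) : Prop :=
  ∀ A : Set ℝ, MeasurableSet A → P A = ∑' x : A, P {(x : ℝ)}

/-- Atoms of `P` are at mutual distance `≥ η`. -/
def Separated (P : Measure ℝ) (η : ℝ) : Prop :=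
  ∀ x y : ℝ, 0 < |x - y| → |x - y| < η → P {x} = 0 ∨ P {y} = 0

/- Auxiliary rpow arithmetic -/
private lemma vmRpowAddOne {x : ℝ} (hx : 0 ≤ x) {s : ℝ} (hs : 0 < s + 1) :
    x ^ (s + 1) = x ^ s * x := by
  rcases hx.eq_or_lt with h | h
  · rw [← h]
    rcases eq_or_ne s 0 with h0 | h0
    · simp [h0]
    · rw [Real.zero_rpow hs.ne', Real.zero_rpow h0, mul_zero]
  · exact Real.rpow_add_one h.ne' s

private lemma vmRpowSubOne {x : ℝ} (hx : 0 ≤ x) {s : ℝ} (hs : 0 < s) :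
    x ^ s = x ^ (s - 1) * x := by
  have := vmRpowAddOne hx (s := s - 1) (by linarith)
  simpa using this

/-- The key pointwise algebraic inequality used on the far set. -/
private lemma key_pointwise {s b c η t : ℝ} (hs : 1 ≤ s) (hb : 0 ≤ b) (hbc : b ≤ c)
    (hbcη : b + c = η) (hct : c ≤ t) :
    η * t ^ s + ((η - 2 * b) * c ^ (s - 1) + 2 * c ^ s) * t
      ≤ 2 * t ^ (s + 1) + 2 * c ^ (s + 1) := by
  have hc : 0 ≤ c := hb.trans hbc
  have ht : 0 ≤ t := hc.trans hct
  have h1 : c ^ s ≤ t ^ s := Real.rpow_le_rpow hc hct (by linarith)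
  have h2 : c ^ (s - 1) ≤ t ^ (s - 1) := Real.rpow_le_rpow hc hct (by linarith)
  have et1 : t ^ (s + 1) = t ^ s * t := vmRpowAddOne ht (by linarith)
  have et2 : t ^ s = t ^ (s - 1) * t := vmRpowSubOne ht (by linarith)
  have ec1 : c ^ (s + 1) = c ^ s * c := vmRpowAddOne hc (by linarith)
  have ec2 : c ^ s = c ^ (s - 1) * c := vmRpowSubOne hc (by linarith)
  have hid : 2 * t ^ (s + 1) + 2 * c ^ (s + 1)
      - (η * t ^ s + ((η - 2 * b) * c ^ (s - 1) + 2 * c ^ s) * t)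
      = 2 * (t - c) * (t ^ s - c ^ s)
        + (η - 2 * b) * (t * (t ^ (s - 1) - c ^ (s - 1))) := by
    rw [et1, ec1, et2, ec2, ← hbcη]; ring
  have hn1 : 0 ≤ 2 * (t - c) * (t ^ s - c ^ s) :=
    mul_nonneg (by linarith) (by linarith)
  have hn2 : 0 ≤ (η - 2 * b) * (t * (t ^ (s - 1) - c ^ (s - 1))) :=
    mul_nonneg (by linarith) (mul_nonneg ht (by linarith))
  linarith

/-- The real-valued core of the von Mises inequality. -/
private lemma von_mises_real (P : Measure ℝ) (hP : IsProbabilityMeasure P)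
    (hdisc : IsDiscreteMeasureR P) (η : ℝ) (hη : 0 ≤ η) (hsep : Separated P η)
    (s : ℝ) (hs : 1 ≤ s) (hint : Integrable (fun x : ℝ => x) P)
    (hfint : Integrable (fun x => |x - mu P| ^ s) P)
    (hgint : Integrable (fun x => |x - mu P| ^ (s + 1)) P) :
    η * ∫ x, |x - mu P| ^ s ∂P ≤ 2 * ∫ x, |x - mu P| ^ (s + 1) ∂P := by
  set μ' := mu P with hμ'
  have hgnn : ∀ x : ℝ, 0 ≤ |x - μ'| ^ (s + 1) := fun x => Real.rpow_nonneg (abs_nonneg _) _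
  have hfnn : ∀ x : ℝ, 0 ≤ |x - μ'| ^ s := fun x => Real.rpow_nonneg (abs_nonneg _) _
  rcases hη.eq_or_lt with hη0 | hηpos
  · rw [← hη0, zero_mul]
    have : 0 ≤ ∫ x, |x - μ'| ^ (s + 1) ∂P := integral_nonneg fun x => hgnn x
    linarith
  set N : Set ℝ := {x | |x - μ'| < η / 2} with hN
  have hNmeas : MeasurableSet N :=
    measurableSet_lt ((measurable_id.sub measurable_const).abs) measurable_const
  by_cases hN0 : P N = 0
  · -- Case A: no atom close to the mean
    have hae : ∀ᵐ x ∂P, η / 2 ≤ |x - μ'| := by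
      filter_upwards [compl_mem_ae_iff.mpr hN0] with x hx
      simpa [hN, not_lt] using hx
    rw [← integral_const_mul, ← integral_const_mul]
    refine integral_mono_ae (hfint.const_mul η) (hgint.const_mul 2) ?_
    filter_upwards [hae] with x hx
    have ht : (0:ℝ) ≤ |x - μ'| := abs_nonneg _
    have e : |x - μ'| ^ (s + 1) = |x - μ'| ^ s * |x - μ'| := vmRpowAddOne ht (by linarith)
    rw [e]
    nlinarith [hfnn x]
  · -- Case B: there is a unique atom a near the mean
    have hex : ∃ x : N, P {(x : ℝ)} ≠ 0 := by
      by_contra hc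
      push_neg at hc
      apply hN0
      rw [hdisc N hNmeas]
      exact (tsum_congr hc).trans tsum_zero
    obtain ⟨⟨a, haN⟩, hpa'⟩ := hex
    have hpa : P {a} ≠ 0 := hpa'
    set b := |a - μ'| with hbdef
    have haN' : b < η / 2 := haN
    set p := (P {a}).toReal with hpdef
    have hp : 0 < p := ENNReal.toReal_pos hpa (measure_ne_top P _)
    have hb : 0 ≤ b := abs_nonneg _
    have hbη : 2 * b ≤ η := by linarith
    set c := η - b with hcdef
    have hbc : b ≤ c := by simp only [hcdef]; linarith
    have hc : 0 < c := by simp only [hcdef]; linarith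
    set F := ({a} : Set ℝ)ᶜ with hFdef
    have hFm : MeasurableSet F := (measurableSet_singleton a).compl
    set q := (P F).toReal with hqdef
    have hq : 0 ≤ q := ENNReal.toReal_nonneg
    -- the set of points ≠ a at distance < c from the mean is null
    set Z : Set ℝ := {x | x ≠ a} ∩ {x | |x - μ'| < c} with hZdef
    have hZm : MeasurableSet Z :=
      ((measurableSet_singleton a).compl).inter
        (measurableSet_lt ((measurable_id.sub measurable_const).abs) measurable_const)
    have hZ0 : P Z = 0 := by
      rw [hdisc Z hZm]
      have hall : ∀ x : Z, P {(x : ℝ)} = 0 := by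
        rintro ⟨x, hxa, hxc⟩
        simp only [mem_setOf_eq] at hxa hxc
        have hxa' : 0 < |x - a| := abs_pos.2 (sub_ne_zero.2 hxa)
        by_cases hlt : |x - a| < η
        · rcases hsep x a hxa' hlt with h | h
          · exact h
          · exact absurd h hpa
        · exfalso
          push_neg at hlt
          have htri : |x - a| ≤ |x - μ'| + |a - μ'| := by
            calc |x - a| ≤ |x - μ'| + |μ' - a| := abs_sub_le x μ' a
            _ = |x - μ'| + |a - μ'| := by rw [abs_sub_comm μ' a]
          simp only [hcdef] at hxc
          linarith
      exact (tsum_congr hall).trans tsum_zero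
    have haeF : ∀ᵐ x ∂(P.restrict F), c ≤ |x - μ'| := by
      have h1 : ∀ᵐ x ∂P, x ∉ Z := compl_mem_ae_iff.mpr hZ0
      filter_upwards [ae_restrict_of_ae (s := F) h1, ae_restrict_mem hFm] with x hxZ hxF
      by_contra hlt
      push_neg at hlt
      exact hxZ ⟨by simpa [hFdef] using hxF, hlt⟩
    have htint : Integrable (fun x => |x - μ'|) P := (hint.sub (integrable_const μ')).abs
    set T := ∫ x in F, |x - μ'| ∂P with hTdef
    -- mean-zero
    have hmean : ∫ x, (x - μ') ∂P = 0 := by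
      rw [integral_sub hint (integrable_const μ'), integral_const]
      simp [hμ', mu]
    have hsplit := integral_add_compl (measurableSet_singleton a)
      (hint.sub (integrable_const μ'))
    have hsing : ∫ x in {a}, (x - μ') ∂P = p * (a - μ') := by
      rw [integral_singleton]
      simp [hpdef, smul_eq_mul, measureReal_def]
    have hFmean : ∫ x in F, (x - μ') ∂P = -(p * (a - μ')) := by
      simp only [Pi.sub_apply] at hsplit
      rw [hmean, hsing] at hsplit
      have : (F : Set ℝ) = ({a} : Set ℝ)ᶜ := hFdef
      rw [this]
      linarith
    have hTpb : p * b ≤ T := by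
      have h1 : p * b = |p * (a - μ')| := by
        rw [abs_mul, abs_of_nonneg hp.le]
      have h2 : |∫ x in F, (x - μ') ∂P| ≤ ∫ x in F, |x - μ'| ∂P := by
        simpa [Real.norm_eq_abs] using
          norm_integral_le_integral_norm (μ := P.restrict F) (f := fun x => x - μ')
      rw [h1, ← abs_neg, ← hFmean]
      exact h2
    have hTqc : q * c ≤ T := by
      have hconst : ∫ x in F, c ∂P ≤ T := by
        refine integral_mono_ae (integrable_const c) (htint.restrict) haeF
      rw [setIntegral_const, smul_eq_mul] at hconst
      exact hconst
    set K := (η - 2 * b) * c ^ (s - 1) + 2 * c ^ s with hKdef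
    have hFbound : ∀ᵐ x ∂(P.restrict F),
        η * |x - μ'| ^ s + K * |x - μ'| ≤ 2 * |x - μ'| ^ (s + 1) + 2 * c ^ (s + 1) := by
      filter_upwards [haeF] with x hx
      exact key_pointwise hs hb hbc (by simp only [hcdef]; ring) hx
    have hInt1 : Integrable (fun x => η * |x - μ'| ^ s + K * |x - μ'|) (P.restrict F) :=
      (hfint.restrict.const_mul η).add (htint.restrict.const_mul K)
    have hInt2 : Integrable (fun x => 2 * |x - μ'| ^ (s + 1) + 2 * c ^ (s + 1))
        (P.restrict F) := (hgint.restrict.const_mul 2).add (integrable_const _)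
    have hFineq := integral_mono_ae hInt1 hInt2 hFbound
    rw [integral_add (hfint.restrict.const_mul η) (htint.restrict.const_mul K),
      integral_add (hgint.restrict.const_mul 2) (integrable_const _),
      integral_const_mul, integral_const_mul, integral_const_mul,
      setIntegral_const, smul_eq_mul, measureReal_def] at hFineq
    -- hFineq : η * ∫_F f + K * T ≤ 2 * ∫_F g + q * (2 * c^(s+1))
    set If := ∫ x in F, |x - μ'| ^ s ∂P with hIf
    set Ig := ∫ x in F, |x - μ'| ^ (s + 1) ∂P with hIg
    have hA0 : 0 ≤ (η - 2 * b) * c ^ (s - 1) :=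
      mul_nonneg (by linarith) (Real.rpow_nonneg hc.le _)
    have hB0 : (0:ℝ) ≤ 2 * c ^ s := by positivity
    have hKT : (η - 2 * b) * c ^ (s - 1) * (p * b) + 2 * c ^ s * (q * c) ≤ K * T := by
      have h1 := mul_le_mul_of_nonneg_left hTpb hA0
      have h2 := mul_le_mul_of_nonneg_left hTqc hB0
      have : K * T = (η - 2 * b) * c ^ (s - 1) * T + 2 * c ^ s * T := by
        rw [hKdef]; ring
      linarith
    have hcs1 : b ^ (s - 1) ≤ c ^ (s - 1) := Real.rpow_le_rpow hb hbc (by linarith)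
    have hbs : (η - 2 * b) * b ^ (s - 1) * (p * b) ≤ (η - 2 * b) * c ^ (s - 1) * (p * b) := by
      have hpb : (0:ℝ) ≤ p * b := mul_nonneg hp.le hb
      have := mul_le_mul_of_nonneg_left hcs1 (by linarith : (0:ℝ) ≤ η - 2 * b)
      exact mul_le_mul_of_nonneg_right this hpb
    have eb1 : b ^ s = b ^ (s - 1) * b := vmRpowSubOne hb (by linarith)
    have eb2 : b ^ (s + 1) = b ^ s * b := vmRpowAddOne hb (by linarith)
    have ecc : c ^ (s + 1) = c ^ s * c := vmRpowAddOne hc.le (by linarith)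
    -- singleton values
    have hfa : ∫ x in {a}, |x - μ'| ^ s ∂P = p * b ^ s := by
      rw [integral_singleton]; simp [hpdef, hbdef, smul_eq_mul, measureReal_def]
    have hga : ∫ x in {a}, |x - μ'| ^ (s + 1) ∂P = p * b ^ (s + 1) := by
      rw [integral_singleton]; simp [hpdef, hbdef, smul_eq_mul, measureReal_def]
    have hsplitf := integral_add_compl (measurableSet_singleton a) hfint
    have hsplitg := integral_add_compl (measurableSet_singleton a) hgint
    rw [hfa] at hsplitf
    rw [hga] at hsplitg
    -- assemble everything
    rw [← hsplitf, ← hsplitg]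
    have e3 : q * (2 * c ^ (s + 1)) = 2 * c ^ s * (q * c) := by rw [ecc]; ring
    have e4 : (η - 2 * b) * b ^ (s - 1) * (p * b) = η * (p * b ^ s) - 2 * (p * b ^ (s + 1)) := by
      rw [eb2, eb1]; ring
    linarith [hFineq, hKT, hbs]

/-- von Mises inequality: for a discrete probability law whose atoms are at
mutual distance `≥ η`, one has `η·β_s ≤ 2·β_{s+1}` in `[0,∞]` for every `s ∈ [1,∞)`. -/
theorem von_mises_inequality (P : Measure ℝ) (hP : IsProbabilityMeasure P)
    (hdisc : IsDiscreteMeasureR P) (η : ℝ) (hη : 0 ≤ η) (hsep : Separated P η) :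
    ∀ s : ℝ, 1 ≤ s → ENNReal.ofReal η * betaE s P ≤ 2 * betaE (s + 1) P := by
  intro s hs
  unfold betaE
  by_cases hint : Integrable (fun x : ℝ => x) P
  swap
  · rw [if_neg hint, if_neg hint, show (2:ℝ≥0∞) * ⊤ = ⊤ by simp]
    exact le_top
  rw [if_pos hint, if_pos hint]
  set μ' := mu P with hμ'
  have hgm : Measurable fun x : ℝ => |x - μ'| ^ (s + 1) :=
    ((measurable_id.sub measurable_const).abs).pow measurable_const
  have hfm : Measurable fun x : ℝ => |x - μ'| ^ s :=
    ((measurable_id.sub measurable_const).abs).pow measurable_const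
  have hgnn : ∀ x : ℝ, 0 ≤ |x - μ'| ^ (s + 1) := fun x => Real.rpow_nonneg (abs_nonneg _) _
  have hfnn : ∀ x : ℝ, 0 ≤ |x - μ'| ^ s := fun x => Real.rpow_nonneg (abs_nonneg _) _
  by_cases hfin : ∫⁻ x, ENNReal.ofReal (|x - μ'| ^ (s + 1)) ∂P = ⊤
  · rw [hfin, show (2:ℝ≥0∞) * ⊤ = ⊤ by simp]
    exact le_top
  have hgint : Integrable (fun x => |x - μ'| ^ (s + 1)) P := by
    refine ⟨hgm.aestronglyMeasurable, ?_⟩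
    rw [hasFiniteIntegral_iff_ofReal (Eventually.of_forall hgnn)]
    exact lt_top_iff_ne_top.mpr hfin
  have hfint : Integrable (fun x => |x - μ'| ^ s) P := by
    refine Integrable.mono ((integrable_const (1:ℝ)).add hgint) hfm.aestronglyMeasurable ?_
    filter_upwards with x
    have ht : (0:ℝ) ≤ |x - μ'| := abs_nonneg _
    have hb : |x - μ'| ^ s ≤ 1 + |x - μ'| ^ (s + 1) := by
      rcases le_total (|x - μ'|) 1 with h1 | h1
      · have : |x - μ'| ^ s ≤ 1 := Real.rpow_le_one ht h1 (by linarith)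
        have := hgnn x
        linarith
      · have : |x - μ'| ^ s ≤ |x - μ'| ^ (s + 1) :=
          Real.rpow_le_rpow_of_exponent_le h1 (by linarith)
        linarith
    simp only [Pi.add_apply, Real.norm_eq_abs]
    rw [abs_of_nonneg (hfnn x),
      abs_of_nonneg (by have := hgnn x; linarith : (0:ℝ) ≤ 1 + |x - μ'| ^ (s + 1))]
    exact hb
  rw [← ofReal_integral_eq_lintegral_ofReal hfint (Eventually.of_forall hfnn),
    ← ofReal_integral_eq_lintegral_ofReal hgint (Eventually.of_forall hgnn),
    ← ENNReal.ofReal_mul hη,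
    show (2 : ℝ≥0∞) = ENNReal.ofReal 2 by norm_num,
    ← ENNReal.ofReal_mul (by norm_num)]
  exact ENNReal.ofReal_le_ofReal
    (von_mises_real P hP hdisc η hη hsep s hs hint hfint hgint)
end

section
/- Let P be a discrete Borel probability measure on ℝ and let η ∈ [0,∞) be such that whenever x, y ∈ ℝ satisfy 0 < |x − y| < η, at least one of P({x}), P({y}) vanishes. Then the finite equality η · β₁(P) = 2 · β₂(P) < ∞ holds if and only if P = λδ_x + (1−λ)δ_{x+η} for some λ ∈ [0,1] and some x ∈ ℝ. -/
open MeasureTheory ProbabilityTheory Real Filter Set ENNReal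
open scoped Classical

/-- A measure on `ℝ` is discrete if it is a (countable) sum of point masses, i.e. the
measure of every (Borel) set is the sum of the masses of its points. -/
def IsDiscreteMeasure (P : Measure ℝ) : Prop :=
  ∀ A : Set ℝ, MeasurableSet A → P A = ∑' x : A, P {(x : ℝ)}

lemma discrete_null {P : Measure ℝ} (hdisc : ∀ A : Set ℝ, MeasurableSet A → P A = ∑' x : A, P {(x : ℝ)})
    {A : Set ℝ} (hA : MeasurableSet A) (h : ∀ x ∈ A, P {x} = 0) : P A = 0 := by
  rw [hdisc A hA]
  exact ENNReal.tsum_eq_zero.mpr (fun x => h x x.2)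

lemma g_neg (η d u : ℝ) (hη : 0 < η) (hd0 : 0 ≤ d) (hd2 : d ≤ η / 2)
    (h : 2 * u ^ 2 - η * |u| + (η - 2 * d) * u < 0) : 0 < |u - d| ∧ |u - d| < η := by
  rcases le_or_gt 0 u with hu | hu
  · rw [abs_of_nonneg hu] at h
    have h1 : 0 < u := by nlinarith
    have h2 : u < d := by nlinarith
    rw [abs_of_nonpos (by linarith)]
    constructor <;> nlinarith
  · rw [abs_of_neg hu] at h
    have h1 : -(η - d) < u := by nlinarith
    rw [abs_of_nonpos (by linarith)]
    constructor <;> nlinarith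

lemma g_zero (η d u : ℝ) (hη : 0 < η) (hd0 : 0 ≤ d) (hd2 : d ≤ η / 2)
    (h : 2 * u ^ 2 - η * |u| + (η - 2 * d) * u = 0) : u = 0 ∨ u = d ∨ u = -(η - d) := by
  rcases le_or_gt 0 u with hu | hu
  · rw [abs_of_nonneg hu] at h
    rcases mul_eq_zero.mp (show (2 * u) * (u - d) = 0 by nlinarith) with h' | h'
    · left; linarith
    · right; left; linarith
  · rw [abs_of_neg hu] at h
    rcases mul_eq_zero.mp (show (2 * u) * (u + (η - d)) = 0 by nlinarith) with h' | h'
    · left; linarith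
    · right; right; linarith

lemma two_point (P : Measure ℝ) (hP : IsProbabilityMeasure P) (x₀ η : ℝ)
    (h0 : P ({x₀, x₀ + η}ᶜ) = 0) :
    ∃ l : ℝ, 0 ≤ l ∧ l ≤ 1 ∧
      P = ENNReal.ofReal l • Measure.dirac x₀ + ENNReal.ofReal (1 - l) • Measure.dirac (x₀ + η) := by
  set p := P {x₀} with hpdef
  set q := P ({x₀ + η} \ {x₀}) with hqdef
  have hS : MeasurableSet ({x₀, x₀ + η} : Set ℝ) :=
    (measurableSet_singleton (x₀+η)).insert x₀
  have hsplit : ({x₀, x₀ + η} : Set ℝ) = {x₀} ∪ ({x₀ + η} \ {x₀}) := by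
    ext y; simp; tauto
  have hdisj : Disjoint ({x₀} : Set ℝ) ({x₀ + η} \ {x₀}) := disjoint_sdiff_right
  have hmq : MeasurableSet ({x₀ + η} \ {x₀} : Set ℝ) :=
    (measurableSet_singleton _).diff (measurableSet_singleton _)
  have hsum : p + q = 1 := by
    have h1 : P {x₀, x₀ + η} + P ({x₀, x₀ + η}ᶜ) = 1 := by
      rw [measure_add_measure_compl hS, measure_univ]
    rw [h0, add_zero] at h1
    rw [← h1, hsplit, measure_union hdisj hmq]
  have hpt : p ≠ ⊤ := measure_ne_top P _
  have hqt : q ≠ ⊤ := measure_ne_top P _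
  have htr : p.toReal + q.toReal = 1 := by
    rw [← ENNReal.toReal_add hpt hqt, hsum, ENNReal.toReal_one]
  refine ⟨p.toReal, ENNReal.toReal_nonneg, by nlinarith [ENNReal.toReal_nonneg (a := q)], ?_⟩
  have hop : ENNReal.ofReal p.toReal = p := ENNReal.ofReal_toReal hpt
  have hoq : ENNReal.ofReal (1 - p.toReal) = q := by
    rw [show 1 - p.toReal = q.toReal by linarith, ENNReal.ofReal_toReal hqt]
  ext A hA
  have hdec : P A = P (A ∩ {x₀, x₀ + η}) + P (A \ {x₀, x₀ + η}) :=
    (measure_inter_add_diff A hS).symm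
  have hz : P (A \ {x₀, x₀ + η}) = 0 :=
    measure_mono_null (diff_subset_compl A _) h0
  have hinter : A ∩ ({x₀, x₀ + η} : Set ℝ) = (A ∩ {x₀}) ∪ (A ∩ ({x₀ + η} \ {x₀})) := by
    rw [hsplit, inter_union_distrib_left]
  have h1 : P (A ∩ {x₀}) = p * (Measure.dirac x₀) A := by
    rw [Measure.dirac_apply' _ hA]
    by_cases hx : x₀ ∈ A
    · rw [Set.inter_eq_right.mpr (singleton_subset_iff.mpr hx)]
      simp [hx]
      exact hpdef.symm
    · have he : A ∩ ({x₀} : Set ℝ) = ∅ := by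
        ext y; simp; rintro hy rfl; exact hx hy
      rw [he]; simp [hx]
  have h2 : P (A ∩ ({x₀ + η} \ {x₀})) = q * (Measure.dirac (x₀ + η)) A := by
    rw [Measure.dirac_apply' _ hA]
    by_cases hx : x₀ + η ∈ A
    · rw [Set.inter_eq_right.mpr (fun y hy => by rw [hy.1]; exact hx)]
      simp [hx]
      exact hqdef.symm
    · have he : A ∩ ({x₀ + η} \ {x₀} : Set ℝ) = ∅ := by
        ext y; simp; rintro hy rfl; exact absurd hy hx
      rw [he]; simp [hx]
  rw [hdec, hz, add_zero, hinter,
    measure_union (hdisj.mono inter_subset_right inter_subset_right) (hA.inter hmq), h1, h2]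
  simp [Measure.add_apply, hop, hoq]

lemma core (P : Measure ℝ) (hP : IsProbabilityMeasure P)
    (hdisc : ∀ A : Set ℝ, MeasurableSet A → P A = ∑' x : A, P {(x : ℝ)})
    (η : ℝ) (hη : 0 < η)
    (hsep : ∀ x y : ℝ, 0 < |x - y| → |x - y| < η → P {x} = 0 ∨ P {y} = 0)
    (μ B1 B2 : ℝ)
    (hxint : Integrable (fun x => x - μ) P)
    (hmean : ∫ x, (x - μ) ∂P = 0)
    (hB1 : Integrable (fun x => |x - μ|) P) (hB1v : ∫ x, |x - μ| ∂P = B1)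
    (hB2 : Integrable (fun x => (x - μ)^2) P) (hB2v : ∫ x, (x - μ)^2 ∂P = B2)
    (heq : η * B1 = 2 * B2)
    (a ε : ℝ) (hε : ε = 1 ∨ ε = -1) (ha : P {a} ≠ 0)
    (hd0' : 0 ≤ ε * (a - μ)) (hd2' : ε * (a - μ) ≤ η / 2) :
    P ({a - ε * η, a}ᶜ) = 0 := by
  have hε2 : ε * ε = 1 := by rcases hε with rfl | rfl <;> norm_num
  have hεabs : |ε| = 1 := by rcases hε with rfl | rfl <;> norm_num
  obtain ⟨d, hd⟩ : ∃ d : ℝ, d = ε * (a - μ) := ⟨_, rfl⟩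
  have hd0 : 0 ≤ d := hd ▸ hd0'
  have hd2 : d ≤ η / 2 := hd ▸ hd2'
  have hεne : ε ≠ 0 := by rcases hε with rfl | rfl <;> norm_num
  have haμ : a - μ = ε * d := by
    linear_combination (-ε) * hd - (a - μ) * hε2
  set h : ℝ → ℝ := fun x => (2 * (x - μ)^2 - η * |x - μ|) + ((η - 2 * d) * ε) * (x - μ)
    with hhdef
  have habs : ∀ x : ℝ, |x - μ| = |ε * (x - μ)| := by
    intro x; rw [abs_mul, hεabs, one_mul]
  have hhval : ∀ x : ℝ,
      h x = 2 * (ε * (x - μ)) ^ 2 - η * |ε * (x - μ)| + (η - 2 * d) * (ε * (x - μ)) := by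
    intro x
    simp only [hhdef]
    rw [habs x]
    linear_combination (-2 * (x - μ)^2) * hε2
  have hxa : ∀ x : ℝ, |x - a| = |ε * (x - μ) - d| := by
    intro x
    have hx' : x - a = ε * (ε * (x - μ) - d) := by
      linear_combination (-(x - a)) * hε2 + ε * hd
    rw [hx', abs_mul, hεabs, one_mul]
  -- integrability and zero integral
  have hfint : Integrable (fun x : ℝ => 2 * (x - μ)^2 - η * |x - μ|) P :=
    (hB2.const_mul 2).sub (hB1.const_mul η)
  have hgint : Integrable (fun x : ℝ => ((η - 2 * d) * ε) * (x - μ)) P :=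
    hxint.const_mul _
  have hint : Integrable h P := hfint.add hgint
  have hI : ∫ x, h x ∂P = 0 := by
    simp only [hhdef]
    rw [integral_add hfint hgint,
      integral_sub (hB2.const_mul 2) (hB1.const_mul η),
      integral_const_mul, integral_const_mul, integral_const_mul, hmean, hB1v, hB2v]
    linarith
  -- negativity set is null
  have hneg : ∀ x : ℝ, h x < 0 → P {x} = 0 := by
    intro x hx
    rw [hhval x] at hx
    obtain ⟨h1, h2⟩ := g_neg η d (ε * (x - μ)) hη hd0 hd2 hx
    rw [← hxa x] at h1 h2
    rcases hsep x a h1 h2 with h' | h'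
    · exact h'
    · exact absurd h' ha
  have hmeas : Measurable h := by
    simp only [hhdef]; fun_prop
  have hbad : P {x | h x < 0} = 0 :=
    discrete_null hdisc (measurableSet_lt hmeas measurable_const) hneg
  have hae : 0 ≤ᵐ[P] h := by
    rw [Filter.EventuallyLE, ae_iff]
    convert hbad using 2
    ext x; simp
  have hzero : h =ᵐ[P] 0 := (integral_eq_zero_iff_of_nonneg_ae hae hint).mp hI
  have hzset : P {x | h x ≠ 0} = 0 := hzero
  -- zero set of h is {μ, a, a - εη}
  have hsub : ({a - ε * η, a}ᶜ : Set ℝ) ⊆ {x | h x ≠ 0} ∪ ({μ} \ {a}) := by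
    intro x hx
    by_cases hz : h x = 0
    · right
      rw [hhval x] at hz
      rcases g_zero η d (ε * (x - μ)) hη hd0 hd2 hz with hu | hu | hu
      · have hxμ : x = μ := by
          rcases mul_eq_zero.mp hu with h' | h'
          · exact absurd h' hεne
          · linarith
        refine ⟨by simp [hxμ], ?_⟩
        simp only [mem_singleton_iff]
        intro hxa'
        exact hx (by right; exact hxa')
      · exfalso
        have hxeq : x = a := by
          have hz2 : ε * (x - a) = 0 := by linear_combination hu + hd
          rcases mul_eq_zero.mp hz2 with h' | h'
          · exact absurd h' hεne
          · linarith
        exact hx (by right; exact hxeq)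
      · exfalso
        have hxeq : x = a - ε * η := by
          have hz2 : ε * (x - (a - ε * η)) = 0 := by linear_combination hu + hd + η * hε2
          rcases mul_eq_zero.mp hz2 with h' | h'
          · exact absurd h' hεne
          · linarith
        exact hx (by left; exact hxeq)
    · left; exact hz
  have hμnull : P ({μ} \ {a} : Set ℝ) = 0 := by
    by_cases hma : μ = a
    · rw [hma]; simp
    · have hdpos : 0 < d := by
        rcases lt_or_eq_of_le hd0 with h' | h'
        · exact h'
        · refine absurd ?_ hma
          rw [← h', mul_zero] at haμ
          linarith
      have h1 : 0 < |μ - a| := by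
        rw [hxa μ]
        simp only [sub_self, mul_zero, zero_sub, abs_neg, abs_of_pos hdpos]
        exact hdpos
      have h2 : |μ - a| < η := by
        rw [hxa μ]
        simp only [sub_self, mul_zero, zero_sub, abs_neg, abs_of_pos hdpos]
        linarith
      rcases hsep μ a h1 h2 with h' | h'
      · exact measure_mono_null diff_subset h'
      · exact absurd h' ha
  refine le_antisymm ?_ (by simp)
  calc P ({a - ε * η, a}ᶜ) ≤ P ({x | h x ≠ 0} ∪ ({μ} \ {a})) := measure_mono hsub
    _ ≤ P {x | h x ≠ 0} + P ({μ} \ {a}) := measure_union_le _ _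
    _ = 0 := by rw [hzset, hμnull, add_zero]

/-- equality discussion in the von Mises inequality for `s = 1`: the finite
equality `η·β₁ = 2·β₂ < ∞` holds iff `P = λδ_x + (1−λ)δ_{x+η}` for some `λ ∈ [0,1]`, `x ∈ ℝ`. -/
theorem von_mises_equality_s_one (P : Measure ℝ) (hP : IsProbabilityMeasure P)
    (hdisc : IsDiscreteMeasure P) (η : ℝ) (hη : 0 ≤ η) (hsep : Separated P η) :
    (ENNReal.ofReal η * betaE 1 P = 2 * betaE 2 P ∧ betaE 2 P < ∞) ↔
      ∃ (l : ℝ) (x : ℝ), 0 ≤ l ∧ l ≤ 1 ∧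
        P = ENNReal.ofReal l • Measure.dirac x
            + ENNReal.ofReal (1 - l) • Measure.dirac (x + η) := by
  have hdisc' : ∀ A : Set ℝ, MeasurableSet A → P A = ∑' x : A, P {(x : ℝ)} := hdisc
  have hsep' : ∀ x y : ℝ, 0 < |x - y| → |x - y| < η → P {x} = 0 ∨ P {y} = 0 := hsep
  constructor
  · rintro ⟨heq, hfin⟩
    have hint2 : Integrable (fun x : ℝ => x) P := by
      by_contra hc
      rw [betaE, if_neg hc] at hfin
      exact absurd hfin (by simp)
    set μ := mu P with hμdef
    have hxint : Integrable (fun x => x - μ) P := hint2.sub (integrable_const μ)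
    have hB1int : Integrable (fun x : ℝ => |x - μ|) P := hxint.abs
    set B1 := ∫ x, |x - μ| ∂P with hB1v
    set B2 := ∫ x, (x - μ)^2 ∂P with hB2v
    have hb1 : betaE 1 P = ENNReal.ofReal B1 := by
      rw [betaE, if_pos hint2, hB1v,
        ofReal_integral_eq_lintegral_ofReal hB1int (ae_of_all _ fun x => abs_nonneg _)]
      exact lintegral_congr fun x => by rw [Real.rpow_one]
    have hb2' : betaE 2 P = ∫⁻ x, ENNReal.ofReal ((x - μ)^2) ∂P := by
      rw [betaE, if_pos hint2]
      exact lintegral_congr fun x => by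
        rw [show ((2:ℝ)) = ((2:ℕ):ℝ) by norm_num, Real.rpow_natCast, sq_abs]
    have hB2int : Integrable (fun x : ℝ => (x - μ)^2) P := by
      refine ⟨(by fun_prop : Measurable fun x : ℝ => (x - μ)^2).aestronglyMeasurable, ?_⟩
      rw [hasFiniteIntegral_iff_ofReal (ae_of_all _ fun x => sq_nonneg _)]
      rw [← hb2']
      exact hfin
    have hb2 : betaE 2 P = ENNReal.ofReal B2 := by
      rw [hb2', hB2v,
        ofReal_integral_eq_lintegral_ofReal hB2int (ae_of_all _ fun x => sq_nonneg _)]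
    have hB1nn : 0 ≤ B1 := integral_nonneg fun x => abs_nonneg _
    have hB2nn : 0 ≤ B2 := integral_nonneg fun x => sq_nonneg _
    rw [hb1, hb2, ← ENNReal.ofReal_mul hη,
      show ((2:ℝ≥0∞)) = ENNReal.ofReal 2 by rw [ENNReal.ofReal_ofNat],
      ← ENNReal.ofReal_mul (by norm_num : (0:ℝ) ≤ 2)] at heq
    have heqr : η * B1 = 2 * B2 := by
      rwa [ENNReal.ofReal_eq_ofReal_iff (mul_nonneg hη hB1nn) (mul_nonneg (by norm_num) hB2nn)]
        at heq
    have hmean : ∫ x, (x - μ) ∂P = 0 := by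
      rw [integral_sub hint2 (integrable_const μ), integral_const, probReal_univ]
      simp [hμdef, mu]
    rcases eq_or_lt_of_le hη with hη0 | hηpos
    · -- η = 0
      have hB20 : B2 = 0 := by nlinarith
      have hz : (fun x : ℝ => (x - μ)^2) =ᵐ[P] 0 :=
        (integral_eq_zero_iff_of_nonneg (fun x => sq_nonneg _) hB2int).mp (by rw [← hB2v]; exact hB20)
      have hae : ∀ᵐ x ∂P, x = μ := by
        filter_upwards [hz] with x hx
        have : (x - μ)^2 = 0 := hx
        nlinarith [sq_nonneg (x - μ)]
      have hnull : P ({μ}ᶜ) = 0 := by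
        have h := ae_iff.mp hae
        have hs : ({μ}ᶜ : Set ℝ) = {y | ¬ y = μ} := by ext y; simp
        rw [hs]; exact h
      obtain ⟨l, h1, h2, h3⟩ := two_point P hP μ η (by
        rw [← hη0, add_zero, Set.pair_eq_singleton]
        exact hnull)
      exact ⟨l, μ, h1, h2, h3⟩
    · by_cases hA : ∀ x ∈ Icc (μ - η/2) (μ + η/2), P {x} = 0
      · exfalso
        have hIcc : P (Icc (μ - η/2) (μ + η/2)) = 0 := discrete_null hdisc' measurableSet_Icc hA
        set g : ℝ → ℝ := fun x => 2*(x-μ)^2 - η*|x-μ| with hgdef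
        have hgint : Integrable g P := (hB2int.const_mul 2).sub (hB1int.const_mul η)
        have hgI : ∫ x, g x ∂P = 0 := by
          simp only [hgdef]
          rw [integral_sub (hB2int.const_mul 2) (hB1int.const_mul η),
            integral_const_mul, integral_const_mul, ← hB1v, ← hB2v]
          linarith
        have haepos : ∀ᵐ x ∂P, 0 < g x := by
          rw [ae_iff]
          refine measure_mono_null ?_ hIcc
          intro x hx
          simp only [mem_setOf_eq, not_lt, hgdef] at hx
          have habs : |x - μ| ≤ η/2 := by
            nlinarith [sq_abs (x - μ), abs_nonneg (x - μ)]
          have h' := abs_le.mp habs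
          rw [mem_Icc]
          constructor <;> linarith [h'.1, h'.2]
        have hzero : g =ᵐ[P] 0 :=
          (integral_eq_zero_iff_of_nonneg_ae (haepos.mono fun x hx => hx.le) hgint).mp hgI
        have hfalse : ∀ᵐ x ∂P, False := by
          filter_upwards [haepos, hzero] with x h1 h2
          rw [h2] at h1
          exact lt_irrefl _ h1
        have h1 : P univ = 0 := by simpa using ae_iff.mp hfalse
        rw [measure_univ] at h1
        exact one_ne_zero h1
      · push_neg at hA
        obtain ⟨a, haI, hamass⟩ := hA
        rcases le_total μ a with hc | hc
        · have hres := core P hP hdisc' η hηpos hsep' μ B1 B2 hxint hmean hB1int hB1v.symm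
            hB2int hB2v.symm heqr a 1 (Or.inl rfl) hamass
            (by rw [one_mul]; linarith)
            (by rw [one_mul]; linarith [haI.2])
          obtain ⟨l, h1, h2, h3⟩ := two_point P hP (a - η) η (by
            rw [show ({a - η, (a - η) + η} : Set ℝ) = {a - 1 * η, a} by norm_num]
            exact hres)
          exact ⟨l, a - η, h1, h2, h3⟩
        · have hres := core P hP hdisc' η hηpos hsep' μ B1 B2 hxint hmean hB1int hB1v.symm
            hB2int hB2v.symm heqr a (-1) (Or.inr rfl) hamass
            (by rw [neg_one_mul]; linarith)
            (by rw [neg_one_mul]; linarith [haI.1])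
          obtain ⟨l, h1, h2, h3⟩ := two_point P hP a η (by
            rw [show ({a, a + η} : Set ℝ) = {a - (-1) * η, a} by rw [Set.pair_comm]; norm_num]
            exact hres)
          exact ⟨l, a, h1, h2, h3⟩
  · rintro ⟨l, x, hl0, hl1, rfl⟩
    have hl1' : (0:ℝ) ≤ 1 - l := by linarith
    have hid : ∀ (a : ℝ) (c : ℝ), 0 ≤ c →
        Integrable (fun y : ℝ => y) (ENNReal.ofReal c • Measure.dirac a) := by
      intro a c _
      refine Integrable.smul_measure ?_ ENNReal.ofReal_ne_top
      refine (integrable_const a).congr ?_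
      rw [Filter.EventuallyEq, ae_dirac_eq]
      simp
    have hPint : Integrable (fun y : ℝ => y)
        (ENNReal.ofReal l • Measure.dirac x + ENNReal.ofReal (1 - l) • Measure.dirac (x + η)) :=
      (hid x l hl0).add_measure (hid (x + η) (1 - l) hl1')
    have hμ : mu (ENNReal.ofReal l • Measure.dirac x
        + ENNReal.ofReal (1 - l) • Measure.dirac (x + η)) = x + (1 - l) * η := by
      rw [mu, integral_add_measure (hid x l hl0) (hid (x + η) (1 - l) hl1'),
        integral_smul_measure, integral_smul_measure, integral_dirac, integral_dirac,
        ENNReal.toReal_ofReal hl0, ENNReal.toReal_ofReal hl1', smul_eq_mul, smul_eq_mul]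
      ring
    have hlint : ∀ f : ℝ → ℝ≥0∞,
        ∫⁻ y, f y ∂(ENNReal.ofReal l • Measure.dirac x
            + ENNReal.ofReal (1 - l) • Measure.dirac (x + η))
          = ENNReal.ofReal l * f x + ENNReal.ofReal (1 - l) * f (x + η) := by
      intro f
      rw [lintegral_add_measure, lintegral_smul_measure, lintegral_smul_measure,
        lintegral_dirac, lintegral_dirac, smul_eq_mul, smul_eq_mul]
    have e1 : |x - (x + (1 - l) * η)| = (1 - l) * η := by
      rw [show x - (x + (1 - l) * η) = -((1 - l) * η) by ring, abs_neg,
        abs_of_nonneg (mul_nonneg hl1' hη)]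
    have e2 : |x + η - (x + (1 - l) * η)| = l * η := by
      rw [show x + η - (x + (1 - l) * η) = l * η by ring, abs_of_nonneg (mul_nonneg hl0 hη)]
    have hb1 : betaE 1 (ENNReal.ofReal l • Measure.dirac x
        + ENNReal.ofReal (1 - l) • Measure.dirac (x + η))
        = ENNReal.ofReal l * ENNReal.ofReal ((1 - l) * η)
          + ENNReal.ofReal (1 - l) * ENNReal.ofReal (l * η) := by
      rw [betaE, if_pos hPint, hlint, hμ, e1, e2, Real.rpow_one, Real.rpow_one]
    have hb2 : betaE 2 (ENNReal.ofReal l • Measure.dirac x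
        + ENNReal.ofReal (1 - l) • Measure.dirac (x + η))
        = ENNReal.ofReal l * ENNReal.ofReal (((1 - l) * η) ^ 2)
          + ENNReal.ofReal (1 - l) * ENNReal.ofReal ((l * η) ^ 2) := by
      rw [betaE, if_pos hPint, hlint, hμ, e1, e2]
      rw [show ((2:ℝ)) = ((2:ℕ):ℝ) by norm_num, Real.rpow_natCast, Real.rpow_natCast]
    constructor
    · rw [hb1, hb2,
        ← ENNReal.ofReal_mul hl0, ← ENNReal.ofReal_mul hl1',
        ← ENNReal.ofReal_add (mul_nonneg hl0 (mul_nonneg hl1' hη))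
          (mul_nonneg hl1' (mul_nonneg hl0 hη)),
        ← ENNReal.ofReal_mul hη,
        ← ENNReal.ofReal_mul hl0, ← ENNReal.ofReal_mul hl1',
        ← ENNReal.ofReal_add (mul_nonneg hl0 (sq_nonneg _)) (mul_nonneg hl1' (sq_nonneg _)),
        show ((2:ℝ≥0∞)) = ENNReal.ofReal 2 by rw [ENNReal.ofReal_ofNat],
        ← ENNReal.ofReal_mul (by norm_num : (0:ℝ) ≤ 2)]
      congr 1
      ring
    · rw [hb2, lt_top_iff_ne_top]
      exact ENNReal.add_ne_top.mpr
        ⟨ENNReal.mul_ne_top ENNReal.ofReal_ne_top ENNReal.ofReal_ne_top,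
         ENNReal.mul_ne_top ENNReal.ofReal_ne_top ENNReal.ofReal_ne_top⟩
end

section
/- Let s ∈ (1,∞), let P be a discrete Borel probability measure on ℝ, and let η ∈ [0,∞) be such that whenever x, y ∈ ℝ satisfy 0 < |x − y| < η, at least one of P({x}), P({y}) vanishes. Then the finite equality η · β_s(P) = 2 · β_{s+1}(P) < ∞ holds if and only if there exists x ∈ ℝ such that P = δ_x or P = (δ_x + δ_{x+η})/2. -/
open MeasureTheory ProbabilityTheory Real Filter Set ENNReal
open scoped Classical

/-- A measure on `ℝ` is discrete if it is a (countable) sum of point masses, i.e. the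
measure of every (Borel) set is the sum of the masses of its points. -/
def IsDiscreteMeas (P : Measure ℝ) : Prop :=
  ∀ A : Set ℝ, MeasurableSet A → P A = ∑' x : A, P {(x : ℝ)}

set_option maxHeartbeats 1000000

private lemma key_ineq {η t u s : ℝ} (hs : 1 ≤ s) (ht : 0 ≤ t)
    (ht2 : 2*t < η) (hu : η - t ≤ u) :
    (η - 2*t) * (η - t)^(s-1) * u ≤ 2*u^(s+1) - η*u^s := by
  have hc : 0 < η - t := by linarith
  have hu0 : 0 < u := lt_of_lt_of_le hc hu
  have h1 : u ^ s = u ^ (s-1) * u := by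
    rw [← Real.rpow_add_one hu0.ne' (s-1)]; ring_nf
  have h2 : u ^ (s+1) = u ^ s * u := Real.rpow_add_one hu0.ne' s
  have h3 : (η - t)^(s-1) ≤ u^(s-1) := Real.rpow_le_rpow hc.le hu (by linarith)
  have h4 : 2*u^(s+1) - η*u^s = ((2*u - η) * u^(s-1)) * u := by rw [h2, h1]; ring
  rw [h4]
  apply mul_le_mul_of_nonneg_right _ hu0.le
  exact mul_le_mul (by linarith) h3 (Real.rpow_nonneg hc.le _) (by linarith)

private lemma ae_atom (P : Measure ℝ) [IsProbabilityMeasure P]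
    (hdisc : IsDiscreteMeas P) : ∀ᵐ x ∂P, P {x} ≠ 0 := by
  set S : Set ℝ := Function.support (fun x : ℝ => P {x}) with hSdef
  have hcount : S.Countable := by
    apply Summable.countable_support_ennreal
    have h := hdisc univ MeasurableSet.univ
    rw [measure_univ] at h
    have h2 : ∑' (x : ℝ), P {x} = 1 :=
      ((Equiv.Set.univ ℝ).tsum_eq (fun x => P {x})).symm.trans h.symm
    rw [h2]; exact one_ne_top
  have h0 : P Sᶜ = 0 := by
    rw [hdisc Sᶜ hcount.measurableSet.compl]
    exact ENNReal.tsum_eq_zero.mpr fun x => Function.notMem_support.mp x.2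
  rw [ae_iff]
  convert h0 using 2; rfl

private lemma eq_dirac_of (P : Measure ℝ) [IsProbabilityMeasure P] {a : ℝ}
    (h : P {a}ᶜ = 0) : P = Measure.dirac a := by
  have hone : P {a} = 1 := prob_compl_eq_zero_iff (measurableSet_singleton a) |>.mp h
  ext A hA
  have key : P A = P (A ∩ {a}) := by
    have := measure_inter_add_diff A (measurableSet_singleton a) (μ := P)
    have hz : P (A \ {a}) = 0 := measure_mono_null (fun x hx => hx.2) h
    rw [hz, add_zero] at this; exact this.symm
  rw [Measure.dirac_apply' a hA, key]
  by_cases haA : a ∈ A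
  · rw [inter_eq_self_of_subset_right (singleton_subset_iff.mpr haA), hone,
      indicator_of_mem haA]; rfl
  · rw [indicator_of_notMem haA]
    have : A ∩ {a} = ∅ := by
      ext x; simp only [mem_inter_iff, mem_singleton_iff, mem_empty_iff_false, iff_false]
      rintro ⟨hxA, rfl⟩; exact haA hxA
    rw [this, measure_empty]

private lemma eq_two_point (P : Measure ℝ) {a b : ℝ} (hab : a ≠ b)
    (h : P ({a, b} : Set ℝ)ᶜ = 0) (ha : P {a} = 2⁻¹) (hb : P {b} = 2⁻¹) :
    P = (2⁻¹ : ℝ≥0∞) • (Measure.dirac a + Measure.dirac b) := by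
  ext A hA
  have key : P A = P (A ∩ {a, b}) := by
    have := measure_inter_add_diff A (MeasurableSet.insert (measurableSet_singleton b) a)
      (μ := P)
    have hz : P (A \ {a, b}) = 0 := measure_mono_null (fun x hx => hx.2) h
    rw [hz, add_zero] at this; exact this.symm
  have hsplit : A ∩ ({a, b} : Set ℝ) = (A ∩ {a}) ∪ (A ∩ {b}) := by
    rw [← inter_union_distrib_left]; rfl
  have hdisj : Disjoint (A ∩ {a}) (A ∩ {b}) := by
    apply Set.disjoint_left.mpr
    rintro x ⟨_, rfl⟩ ⟨_, h2⟩
    exact hab (mem_singleton_iff.mp h2)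
  have hPA : P A = P (A ∩ {a}) + P (A ∩ {b}) := by
    rw [key, hsplit, measure_union hdisj (hA.inter (measurableSet_singleton b))]
  have hsing : ∀ (c : ℝ), P (A ∩ {c}) = if c ∈ A then P {c} else 0 := by
    intro c
    by_cases hc : c ∈ A
    · rw [if_pos hc, inter_eq_self_of_subset_right (singleton_subset_iff.mpr hc)]
    · rw [if_neg hc]
      have : A ∩ {c} = ∅ := by
        ext x; simp only [mem_inter_iff, mem_singleton_iff, mem_empty_iff_false, iff_false]
        rintro ⟨hxA, rfl⟩; exact hc hxA
      rw [this, measure_empty]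
  rw [hPA, hsing a, hsing b, ha, hb]
  simp only [Measure.smul_apply, Measure.add_apply, Measure.dirac_apply' _ hA, smul_eq_mul]
  by_cases haA : a ∈ A <;> by_cases hbA : b ∈ A <;>
    simp [haA, hbA, indicator_of_mem, indicator_of_notMem, mul_add,
      ENNReal.inv_mul_cancel (two_ne_zero' ℝ≥0∞)]

private lemma setIntegral_singleton' (P : Measure ℝ) (f : ℝ → ℝ) (a : ℝ) :
    ∫ x in ({a} : Set ℝ), f x ∂P = (P {a}).toReal * f a := by
  rw [Measure.restrict_singleton, integral_smul_measure, integral_dirac, smul_eq_mul]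

private lemma integrable_id_dirac (a : ℝ) : Integrable (fun x : ℝ => x) (Measure.dirac a) := by
  refine (integrable_const a).congr ?_
  rw [Filter.EventuallyEq, ae_dirac_eq]
  exact Filter.eventually_pure.mpr rfl

private lemma mu_dirac (a : ℝ) : mu (Measure.dirac a) = a := by
  rw [mu, integral_dirac]

private lemma betaE_dirac (s : ℝ) (hs : s ≠ 0) (a : ℝ) : betaE s (Measure.dirac a) = 0 := by
  rw [betaE, if_pos (integrable_id_dirac a), lintegral_dirac, mu_dirac]
  simp [Real.zero_rpow hs]

private lemma mu_two_point (x η : ℝ) :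
    mu ((2⁻¹ : ℝ≥0∞) • (Measure.dirac x + Measure.dirac (x + η))) = x + η / 2 := by
  rw [mu, integral_smul_measure, integral_add_measure (integrable_id_dirac x)
    (integrable_id_dirac (x + η)), integral_dirac, integral_dirac]
  simp only [toReal_inv, toReal_ofNat, smul_eq_mul]
  ring

private lemma betaE_two_point (s : ℝ) (x η : ℝ) (hη : 0 ≤ η) :
    betaE s ((2⁻¹ : ℝ≥0∞) • (Measure.dirac x + Measure.dirac (x + η))) =
      ENNReal.ofReal ((η / 2) ^ s) := by
  have hint : Integrable (fun y : ℝ => y)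
      ((2⁻¹ : ℝ≥0∞) • (Measure.dirac x + Measure.dirac (x + η))) := by
    exact (((integrable_id_dirac x).add_measure (integrable_id_dirac (x + η))).smul_measure
      (by norm_num))
  rw [betaE, if_pos hint, mu_two_point, lintegral_smul_measure, lintegral_add_measure,
    lintegral_dirac, lintegral_dirac]
  have h1 : |x - (x + η / 2)| = η / 2 := by rw [abs_sub_comm]; rw [abs_of_nonneg] <;> [skip; linarith]; ring
  have h2 : |x + η - (x + η / 2)| = η / 2 := by rw [abs_of_nonneg] <;> [skip; linarith]; ring
  rw [h1, h2, ← two_mul, smul_eq_mul, ← mul_assoc, ENNReal.inv_mul_cancel (two_ne_zero' ℝ≥0∞) (by norm_num),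
    one_mul]

private lemma converse_dir (s : ℝ) (hs : 1 < s) (η : ℝ) (hη : 0 ≤ η) (P : Measure ℝ)
    (h : ∃ x : ℝ, P = Measure.dirac x ∨
      P = (2⁻¹ : ℝ≥0∞) • (Measure.dirac x + Measure.dirac (x + η))) :
    ENNReal.ofReal η * betaE s P = 2 * betaE (s + 1) P ∧ betaE (s + 1) P < ∞ := by
  obtain ⟨x, hx | hx⟩ := h
  · subst hx
    rw [betaE_dirac s (by linarith), betaE_dirac (s + 1) (by linarith)]
    simp
  · subst hx
    rw [betaE_two_point s x η hη, betaE_two_point (s + 1) x η hη]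
    refine ⟨?_, ofReal_lt_top⟩
    rcases eq_or_lt_of_le hη with h0 | h0
    · rw [← h0]
      simp [Real.zero_rpow (show s ≠ 0 by linarith),
        Real.zero_rpow (show s + 1 ≠ 0 by linarith)]
    · rw [← ENNReal.ofReal_mul hη, ← ENNReal.ofReal_ofNat, ← ENNReal.ofReal_mul (by norm_num)]
      congr 1
      rw [Real.rpow_add_one (by positivity : (η / 2 : ℝ) ≠ 0) s]
      ring

private lemma forward_dir (s : ℝ) (hs : 1 < s) (P : Measure ℝ)
    (hP : IsProbabilityMeasure P) (hdisc : IsDiscreteMeas P) (η : ℝ) (hη : 0 ≤ η)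
    (hsep : Separated P η)
    (heq : ENNReal.ofReal η * betaE s P = 2 * betaE (s + 1) P)
    (hfin : betaE (s + 1) P < ∞) :
    ∃ x : ℝ, P = Measure.dirac x ∨
      P = (2⁻¹ : ℝ≥0∞) • (Measure.dirac x + Measure.dirac (x + η)) := by
  have hInt : Integrable (fun x : ℝ => x) P := by
    by_contra hI
    rw [betaE, if_neg hI] at hfin
    exact lt_irrefl _ hfin
  have hβ1 : betaE (s + 1) P = ∫⁻ x, ENNReal.ofReal (|x - mu P| ^ (s + 1)) ∂P := by
    rw [betaE, if_pos hInt]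
  have hβ0 : betaE s P = ∫⁻ x, ENNReal.ofReal (|x - mu P| ^ s) ∂P := by
    rw [betaE, if_pos hInt]
  have hcont : ∀ r : ℝ, 0 ≤ r → Continuous (fun x : ℝ => |x - mu P| ^ r) := fun r hr =>
    ((continuous_id.sub continuous_const).abs).rpow_const (fun x => Or.inr hr)
  have hmean0 : ∫ x, (x - mu P) ∂P = 0 := by
    rw [integral_sub hInt (integrable_const (mu P)), integral_const]
    simp [mu]
  -- case η = 0
  rcases eq_or_lt_of_le hη with hη0 | hη0
  · have h20 : betaE (s + 1) P = 0 := by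
      rw [← hη0, ENNReal.ofReal_zero, zero_mul] at heq
      simpa using heq.symm
    rw [hβ1, lintegral_eq_zero_iff
      ((hcont (s + 1) (by linarith)).measurable.ennreal_ofReal)] at h20
    have hmem : ∀ᵐ x ∂P, x ∈ ({mu P} : Set ℝ) := by
      filter_upwards [h20] with x hx
      simp only [Pi.zero_apply, ENNReal.ofReal_eq_zero] at hx
      have h1 : |x - mu P| ^ (s + 1) = 0 :=
        le_antisymm hx (Real.rpow_nonneg (abs_nonneg _) _)
      have h2 : |x - mu P| = 0 := by
        rcases Real.rpow_eq_zero_iff_of_nonneg (abs_nonneg (x - mu P)) |>.mp h1 with ⟨h, _⟩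
        exact h
      simpa [sub_eq_zero] using abs_eq_zero.mp h2
    refine ⟨mu P, Or.inl (eq_dirac_of P ?_)⟩
    rw [ae_iff] at hmem
    convert hmem using 2; rfl
  -- case η > 0
  have hβs_ne : betaE s P ≠ ∞ := by
    intro h
    rw [h, ENNReal.mul_top (by simp [ENNReal.ofReal_eq_zero]; linarith)] at heq
    exact (ENNReal.mul_lt_top (by norm_num : (2:ℝ≥0∞) < ∞) hfin).ne heq.symm
  have hβs1_ne : betaE (s + 1) P ≠ ∞ := hfin.ne
  have habs_nonneg : ∀ r : ℝ, 0 ≤ᵐ[P] fun x => |x - mu P| ^ r := fun r =>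
    ae_of_all _ fun x => Real.rpow_nonneg (abs_nonneg _) _
  have hDsint : Integrable (fun x => |x - mu P| ^ s) P := by
    refine (lintegral_ofReal_ne_top_iff_integrable
      (hcont s (by linarith)).measurable.aestronglyMeasurable (habs_nonneg s)).mp ?_
    rw [← hβ0]; exact hβs_ne
  have hDs1int : Integrable (fun x => |x - mu P| ^ (s + 1)) P := by
    refine (lintegral_ofReal_ne_top_iff_integrable
      (hcont (s + 1) (by linarith)).measurable.aestronglyMeasurable
      (habs_nonneg (s + 1))).mp ?_
    rw [← hβ1]; exact hβs1_ne
  have hD1int : Integrable (fun x : ℝ => |x - mu P|) P := (hInt.sub (integrable_const _)).abs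
  set g : ℝ → ℝ := fun x => 2 * |x - mu P| ^ (s + 1) - η * |x - mu P| ^ s with hgdef
  have hgint : Integrable g P := (hDs1int.const_mul 2).sub (hDsint.const_mul η)
  -- ∫ g = 0
  have hB1 : ∫ x, |x - mu P| ^ s ∂P = (betaE s P).toReal := by
    rw [integral_eq_lintegral_of_nonneg_ae (habs_nonneg s)
      (hcont s (by linarith)).measurable.aestronglyMeasurable, hβ0]
  have hB2 : ∫ x, |x - mu P| ^ (s + 1) ∂P = (betaE (s + 1) P).toReal := by
    rw [integral_eq_lintegral_of_nonneg_ae (habs_nonneg (s + 1))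
      (hcont (s + 1) (by linarith)).measurable.aestronglyMeasurable, hβ1]
  have hreal : η * (betaE s P).toReal = 2 * (betaE (s + 1) P).toReal := by
    have := congrArg ENNReal.toReal heq
    rwa [ENNReal.toReal_mul, ENNReal.toReal_mul, ENNReal.toReal_ofReal hη,
      ENNReal.toReal_ofNat] at this
  have hE0 : ∫ x, g x ∂P = 0 := by
    rw [hgdef]
    simp only
    rw [integral_sub (hDs1int.const_mul 2) (hDsint.const_mul η), integral_const_mul,
      integral_const_mul, hB1, hB2]
    linarith
  have hae := ae_atom P hdisc
  by_cases hA : ∃ a : ℝ, P {a} ≠ 0 ∧ 0 < |a - mu P| ∧ 2 * |a - mu P| < η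
  · -- strict inequality: contradiction
    exfalso
    obtain ⟨a, hpa, ht0, ht2⟩ := hA
    set t := |a - mu P| with htdef
    set p := (P {a}).toReal with hpdef
    have hp0 : 0 < p := ENNReal.toReal_pos hpa (measure_ne_top P _)
    have hfar : ∀ x : ℝ, P {x} ≠ 0 → x ≠ a → η - t ≤ |x - mu P| := by
      intro x hx hxa
      have h1 : η ≤ |x - a| := by
        by_contra hlt
        push_neg at hlt
        rcases hsep x a (abs_pos.mpr (sub_ne_zero.mpr hxa)) hlt with h | h
        exacts [hx h, hpa h]
      have h2 : |x - a| ≤ |x - mu P| + t := by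
        calc |x - a| = |(x - mu P) - (a - mu P)| := by ring_nf
          _ ≤ |x - mu P| + |a - mu P| := abs_sub _ _
      linarith
    have hsplit := integral_add_compl (measurableSet_singleton a) hgint
    have hts : t ^ s = t ^ (s - 1) * t := by
      rw [← Real.rpow_add_one (ne_of_gt ht0) (s - 1)]; ring_nf
    have hga : ∫ x in ({a} : Set ℝ), g x ∂P = p * ((2 * t - η) * t ^ s) := by
      rw [setIntegral_singleton']
      congr 1
      rw [hgdef]
      simp only
      rw [Real.rpow_add_one (ne_of_gt ht0) s]
      ring
    have hcompl : (η - 2 * t) * (η - t) ^ (s - 1) * ∫ x in ({a}ᶜ : Set ℝ), |x - mu P| ∂P ≤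
        ∫ x in ({a}ᶜ : Set ℝ), g x ∂P := by
      rw [← integral_const_mul]
      refine integral_mono_ae ((hD1int.restrict).const_mul _) hgint.restrict ?_
      filter_upwards [ae_restrict_of_ae hae,
        ae_restrict_mem (measurableSet_singleton a).compl] with x hx hxc
      exact key_ineq hs.le (abs_nonneg _) (by linarith) (hfar x hx hxc)
    have hDlow : p * t ≤ ∫ x in ({a}ᶜ : Set ℝ), |x - mu P| ∂P := by
      have h1 : ∫ x in ({a} : Set ℝ), (x - mu P) ∂P = p * (a - mu P) :=
        setIntegral_singleton' P (fun x => x - mu P) a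
      have h2 : (∫ x in ({a} : Set ℝ), (x - mu P) ∂P) +
          ∫ x in ({a}ᶜ : Set ℝ), (x - mu P) ∂P = ∫ x, (x - mu P) ∂P :=
        integral_add_compl (measurableSet_singleton a) (hInt.sub (integrable_const (mu P)))
      rw [hmean0, h1] at h2
      have h3 : ∫ x in ({a}ᶜ : Set ℝ), (x - mu P) ∂P = -(p * (a - mu P)) := by linarith
      calc p * t = |∫ x in ({a}ᶜ : Set ℝ), (x - mu P) ∂P| := by
            rw [h3, abs_neg, abs_mul, abs_of_nonneg hp0.le]
        _ ≤ ∫ x in ({a}ᶜ : Set ℝ), |x - mu P| ∂P := by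
            simpa [Real.norm_eq_abs] using
              norm_integral_le_integral_norm (μ := P.restrict {a}ᶜ) (fun x => x - mu P)
    have hstrict : t ^ (s - 1) < (η - t) ^ (s - 1) :=
      Real.rpow_lt_rpow (abs_nonneg _) (by linarith) (by linarith)
    have hc0 : 0 ≤ (η - 2 * t) * (η - t) ^ (s - 1) :=
      mul_nonneg (by linarith) (Real.rpow_nonneg (by linarith) _)
    have hrpow0 : 0 ≤ t ^ (s - 1) := Real.rpow_nonneg (abs_nonneg _) _
    have hgc : (η - 2 * t) * (η - t) ^ (s - 1) * (p * t) ≤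
        ∫ x in ({a}ᶜ : Set ℝ), g x ∂P :=
      le_trans (mul_le_mul_of_nonneg_left hDlow hc0) hcompl
    rw [hE0, hga] at hsplit
    have hle : p * ((2 * t - η) * t ^ s) + (η - 2 * t) * (η - t) ^ (s - 1) * (p * t) ≤ 0 := by
      linarith
    have heqq : p * ((2 * t - η) * t ^ s) + (η - 2 * t) * (η - t) ^ (s - 1) * (p * t) =
        p * t * (η - 2 * t) * ((η - t) ^ (s - 1) - t ^ (s - 1)) := by
      rw [hts]; ring
    have hpos : 0 < p * t * (η - 2 * t) * ((η - t) ^ (s - 1) - t ^ (s - 1)) :=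
      mul_pos (mul_pos (mul_pos hp0 ht0) (by linarith)) (sub_pos.mpr hstrict)
    rw [heqq] at hle
    linarith
  · -- no close atom
    push_neg at hA
    have hg_nonneg : 0 ≤ᵐ[P] g := by
      filter_upwards [hae] with x hx
      rcases eq_or_lt_of_le (abs_nonneg (x - mu P)) with h0 | h0
      · have habs : |x - mu P| = 0 := h0.symm
        simp only [hgdef, Pi.zero_apply, habs, Real.zero_rpow (show s + 1 ≠ 0 by linarith),
          Real.zero_rpow (show s ≠ 0 by linarith)]
        norm_num
      · have hge := hA x hx h0
        have hus : (0:ℝ) ≤ |x - mu P| ^ s := Real.rpow_nonneg (abs_nonneg _) _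
        have h1 : |x - mu P| ^ (s + 1) = |x - mu P| ^ s * |x - mu P| :=
          Real.rpow_add_one (ne_of_gt h0) s
        simp only [hgdef, Pi.zero_apply, h1]
        nlinarith
    have hgzero : g =ᵐ[P] 0 := (integral_eq_zero_iff_of_nonneg_ae hg_nonneg hgint).mp hE0
    have hmemT : ∀ᵐ x ∂P, x ∈ ({mu P - η / 2, mu P, mu P + η / 2} : Set ℝ) := by
      filter_upwards [hgzero] with x hg0
      rcases eq_or_lt_of_le (abs_nonneg (x - mu P)) with h0 | h0
      · have hxeq : x = mu P := by
          have := abs_eq_zero.mp h0.symm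
          linarith [sub_eq_zero.mp this]
        simp [hxeq]
      · have hus : (0:ℝ) < |x - mu P| ^ s := Real.rpow_pos_of_pos h0 s
        have h1 : |x - mu P| ^ (s + 1) = |x - mu P| ^ s * |x - mu P| :=
          Real.rpow_add_one (ne_of_gt h0) s
        have hg0' : 2 * (|x - mu P| ^ s * |x - mu P|) - η * |x - mu P| ^ s = 0 := by
          rw [← h1]; exact hg0
        have hu : |x - mu P| = η / 2 := by nlinarith
        rcases (abs_eq (by linarith : (0:ℝ) ≤ η / 2)).mp hu with h | h
        · right; right; show x ∈ ({mu P + η / 2} : Set ℝ); rw [mem_singleton_iff]; linarith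
        · left; linarith
    have hTc : P ({mu P - η / 2, mu P, mu P + η / 2} : Set ℝ)ᶜ = 0 := by
      rw [ae_iff] at hmemT
      convert hmemT using 2; rfl
    set xlo : ℝ := mu P - η / 2 with hxlo
    set xmid : ℝ := mu P with hxmid
    set xhi : ℝ := mu P + η / 2 with hxhi
    have hne1 : xlo ≠ xmid := by rw [hxlo, hxmid]; intro h; linarith
    have hne2 : xmid ≠ xhi := by rw [hxmid, hxhi]; intro h; linarith
    have hne3 : xlo ≠ xhi := by rw [hxlo, hxhi]; intro h; linarith
    have hTms : MeasurableSet ({xlo, xmid, xhi} : Set ℝ) :=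
      ((measurableSet_singleton xhi).insert xmid).insert xlo
    have hT1 : P ({xlo, xmid, xhi} : Set ℝ) = 1 := prob_compl_eq_zero_iff hTms |>.mp hTc
    have e1 : ({xlo, xmid, xhi} : Set ℝ) = {xlo} ∪ ({xmid} ∪ {xhi}) := by
      rw [Set.insert_eq, Set.insert_eq]
    have hd1 : Disjoint ({xmid} : Set ℝ) ({xhi} : Set ℝ) := by
      rw [Set.disjoint_singleton_left]; simpa using hne2
    have hd2 : Disjoint ({xlo} : Set ℝ) (({xmid} : Set ℝ) ∪ ({xhi} : Set ℝ)) := by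
      rw [Set.disjoint_singleton_left]
      simp only [Set.mem_union, mem_singleton_iff]
      tauto
    have hadd : P ({xlo, xmid, xhi} : Set ℝ) = P {xlo} + (P {xmid} + P {xhi}) := by
      rw [e1, measure_union hd2 ((measurableSet_singleton xmid).union
        (measurableSet_singleton xhi)), measure_union hd1 (measurableSet_singleton xhi)]
    set rlo : ℝ := (P {xlo}).toReal with hrlo
    set rmid : ℝ := (P {xmid}).toReal with hrmid
    set rhi : ℝ := (P {xhi}).toReal with hrhi
    have hsum : rlo + (rmid + rhi) = 1 := by
      rw [hrlo, hrmid, hrhi, ← ENNReal.toReal_add (measure_ne_top P _) (measure_ne_top P _),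
        ← ENNReal.toReal_add (measure_ne_top P _)
          (ENNReal.add_ne_top.mpr ⟨measure_ne_top P _, measure_ne_top P _⟩),
        ← hadd, hT1, ENNReal.toReal_one]
    have hfsub : Integrable (fun x : ℝ => x - mu P) P := hInt.sub (integrable_const (mu P))
    have hTint : ∫ x in ({xlo, xmid, xhi} : Set ℝ), (x - mu P) ∂P =
        rlo * (xlo - mu P) + (rmid * (xmid - mu P) + rhi * (xhi - mu P)) := by
      rw [e1, setIntegral_union hd2 ((measurableSet_singleton xmid).union
          (measurableSet_singleton xhi)) hfsub.integrableOn hfsub.integrableOn,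
        setIntegral_union hd1 (measurableSet_singleton xhi) hfsub.integrableOn
          hfsub.integrableOn, setIntegral_singleton', setIntegral_singleton',
        setIntegral_singleton']
    have hcompl0 : ∫ x in (({xlo, xmid, xhi} : Set ℝ)ᶜ), (x - mu P) ∂P = 0 := by
      rw [show P.restrict (({xlo, xmid, xhi} : Set ℝ)ᶜ) = 0 from
        Measure.restrict_eq_zero.mpr hTc]
      exact integral_zero_measure _
    have hTtotal : (∫ x in ({xlo, xmid, xhi} : Set ℝ), (x - mu P) ∂P) +
        ∫ x in (({xlo, xmid, xhi} : Set ℝ)ᶜ), (x - mu P) ∂P = ∫ x, (x - mu P) ∂P :=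
      integral_add_compl hTms hfsub
    rw [hmean0, hcompl0, add_zero, hTint] at hTtotal
    have hxlov : xlo - mu P = -(η / 2) := by rw [hxlo]; ring
    have hxmidv : xmid - mu P = 0 := by rw [hxmid]; ring
    have hxhiv : xhi - mu P = η / 2 := by rw [hxhi]; ring
    rw [hxlov, hxmidv, hxhiv] at hTtotal
    have hrr : rlo = rhi := by
      have h2 : (rhi - rlo) * (η / 2) = 0 := by linear_combination hTtotal
      rcases mul_eq_zero.mp h2 with h | h
      · linarith
      · linarith
    by_cases hq0 : P {xmid} = 0
    · -- two-point case
      have hrmid0 : rmid = 0 := by rw [hrmid, hq0, ENNReal.toReal_zero]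
      have hhalf : rlo = 1 / 2 := by rw [hrmid0] at hsum; linarith
      have hmlo : P {xlo} = 2⁻¹ := by
        rw [← ENNReal.toReal_eq_toReal_iff' (measure_ne_top P _) (by norm_num : (2⁻¹:ℝ≥0∞) ≠ ∞)]
        rw [← hrlo, hhalf]
        simp
      have hmhi : P {xhi} = 2⁻¹ := by
        rw [← ENNReal.toReal_eq_toReal_iff' (measure_ne_top P _) (by norm_num : (2⁻¹:ℝ≥0∞) ≠ ∞)]
        rw [← hrhi, ← hrr, hhalf]
        simp
      have h2c : P (({xlo, xhi} : Set ℝ)ᶜ) = 0 := by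
        refine measure_mono_null ?_ (measure_union_null hTc hq0)
        intro y hy
        simp only [Set.mem_compl_iff, mem_insert_iff, mem_singleton_iff, not_or] at hy
        simp only [Set.mem_union, Set.mem_compl_iff, mem_insert_iff, mem_singleton_iff,
          not_or]
        tauto
      refine ⟨xlo, Or.inr ?_⟩
      rw [show xlo + η = xhi by rw [hxlo, hxhi]; ring]
      exact eq_two_point P hne3 h2c hmlo hmhi
    · -- dirac case
      have d1 : |xmid - xhi| = η / 2 := by
        rw [hxmid, hxhi, abs_sub_comm]
        rw [show mu P + η / 2 - mu P = η / 2 by ring]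
        exact abs_of_nonneg (by linarith)
      have d2 : |xlo - xmid| = η / 2 := by
        rw [hxlo, hxmid, abs_sub_comm]
        rw [show mu P - (mu P - η / 2) = η / 2 by ring]
        exact abs_of_nonneg (by linarith)
      have hqhi : P {xhi} = 0 :=
        (hsep xmid xhi (by rw [d1]; linarith) (by rw [d1]; linarith)).resolve_left hq0
      have hqlo : P {xlo} = 0 :=
        (hsep xlo xmid (by rw [d2]; linarith) (by rw [d2]; linarith)).resolve_right hq0
      have hcomp : P (({xmid} : Set ℝ)ᶜ) = 0 := by
        refine measure_mono_null ?_
          (measure_union_null (measure_union_null hTc hqlo) hqhi)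
        intro y hy
        simp only [Set.mem_compl_iff, mem_singleton_iff] at hy
        simp only [Set.mem_union, Set.mem_compl_iff, mem_insert_iff, mem_singleton_iff,
          not_or]
        tauto
      exact ⟨xmid, Or.inl (eq_dirac_of P hcomp)⟩

/-- equality discussion in the von Mises inequality for `s > 1`: the finite
equality `η·β_s = 2·β_{s+1} < ∞` holds iff `P = δ_x` or `P = (δ_x + δ_{x+η})/2` for some `x`. -/
theorem von_mises_equality_s_gt_one (s : ℝ) (hs : 1 < s) (P : Measure ℝ)
    (hP : IsProbabilityMeasure P) (hdisc : IsDiscreteMeas P) (η : ℝ) (hη : 0 ≤ η)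
    (hsep : Separated P η) :
    (ENNReal.ofReal η * betaE s P = 2 * betaE (s + 1) P ∧ betaE (s + 1) P < ∞) ↔
      ∃ x : ℝ, P = Measure.dirac x ∨
        P = (2⁻¹ : ℝ≥0∞) • (Measure.dirac x + Measure.dirac (x + η)) := by
  constructor
  · rintro ⟨heq, hfin⟩
    exact forward_dir s hs P hP hdisc η hη hsep heq hfin
  · exact converse_dir s hs η hη P
end

section
/- Let h > 0 and 0 ≤ α ≤ h, and define f : ℝ → ℝ by f(y) = (h + α/3)/√(2π) + h·φ(y) + (α/3)·φ''(y), where φ(y) = e^{−y²/2}/√(2π) and φ''(y) = (y² − 1)φ(y). Then f attains its maximum over ℝ at y = 0 and sup_{y∈ℝ} f(y) = 2h/√(2π). -/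
open Real Set

/-- for `h > 0` and `0 ≤ α ≤ h`, the function
`f(y) = (h + α/3)/√(2π) + h·φ(y) + (α/3)·φ''(y)` attains its maximum over `ℝ` at `y = 0`,
with `sup f = 2h/√(2π)`. -/
theorem max_at_zero (h α : ℝ) (hh : 0 < h) (hα0 : 0 ≤ α) (hαh : α ≤ h)
    (φ : ℝ → ℝ) (hφ : ∀ y, φ y = Real.exp (-y ^ 2 / 2) / Real.sqrt (2 * π))
    (f : ℝ → ℝ) (hf : ∀ y, f y = (h + α / 3) / Real.sqrt (2 * π) + h * φ y
      + (α / 3) * ((y ^ 2 - 1) * φ y)) :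
    (∀ y : ℝ, f y ≤ f 0) ∧ (⨆ y : ℝ, f y) = 2 * h / Real.sqrt (2 * π) := by
  have hs : (0:ℝ) < Real.sqrt (2 * π) := Real.sqrt_pos.2 (by positivity)
  have hf0 : f 0 = 2 * h / Real.sqrt (2 * π) := by
    rw [hf, hφ]
    norm_num
    field_simp
    ring
  have key : ∀ y : ℝ, f y ≤ 2 * h / Real.sqrt (2 * π) := by
    intro y
    rw [hf, hφ]
    have hexp : 1 + y ^ 2 / 2 ≤ Real.exp (y ^ 2 / 2) := by
      have := Real.add_one_le_exp (y ^ 2 / 2); linarith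
    have hpos : 0 < Real.exp (y ^ 2 / 2) := Real.exp_pos _
    have h1 : h + α / 3 * (y ^ 2 - 1) ≤ (h - α / 3) * Real.exp (y ^ 2 / 2) := by
      have hc : (0:ℝ) ≤ h - α / 3 := by linarith
      have hb : 2 * α / 3 ≤ h - α / 3 := by linarith
      have ht : (0:ℝ) ≤ y ^ 2 / 2 := by positivity
      nlinarith [mul_le_mul_of_nonneg_right hb ht, mul_le_mul_of_nonneg_left hexp hc]
    have h2 : (h + α / 3 * (y ^ 2 - 1)) * Real.exp (-y ^ 2 / 2) ≤ h - α / 3 := by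
      have he : Real.exp (-y ^ 2 / 2) = (Real.exp (y ^ 2 / 2))⁻¹ := by
        rw [← Real.exp_neg]; ring_nf
      rw [he]
      rw [mul_inv_le_iff₀ hpos]
      linarith
    have : (h + α / 3) / Real.sqrt (2 * π)
        + h * (Real.exp (-y ^ 2 / 2) / Real.sqrt (2 * π))
        + α / 3 * ((y ^ 2 - 1) * (Real.exp (-y ^ 2 / 2) / Real.sqrt (2 * π)))
        = ((h + α / 3) + (h + α / 3 * (y ^ 2 - 1)) * Real.exp (-y ^ 2 / 2))
          / Real.sqrt (2 * π) := by field_simp; ring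
    rw [this]
    
    gcongr
    linarith
  have key0 : ∀ y : ℝ, f y ≤ f 0 := fun y => hf0 ▸ key y
  refine ⟨key0, le_antisymm (ciSup_le (fun y => hf0 ▸ key y)) ?_⟩
  calc 2 * h / Real.sqrt (2 * π) = f 0 := hf0.symm
    _ ≤ ⨆ y, f y := le_ciSup ⟨f 0, fun x ⟨y, hy⟩ => hy ▸ key0 y⟩ 0
end

section
/- Let 0 ≤ h < α, and define f : ℝ → ℝ by f(y) = (h + α/3)/√(2π) + h·φ(y) + (α/3)·φ''(y), where φ(y) = e^{−y²/2}/√(2π) and φ''(y) = (y² − 1)φ(y). Then with y₀ = √(3 − 3h/α), the function f attains its maximum over ℝ exactly at y = y₀ and y = −y₀, and sup_{y∈ℝ} f(y) = (1/√(2π)) · ( h + α/3 + (2α/3) · exp( −(3/2)(1 − h/α) ) ). -/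
open Real Set

/-- for `0 ≤ h < α`, the function
`f(y) = (h + α/3)/√(2π) + h·φ(y) + (α/3)·φ''(y)` attains its maximum over `ℝ` exactly at
`y = ±y₀` with `y₀ = √(3 − 3h/α)`, and the maximal value is
`(1/√(2π))·(h + α/3 + (2α/3)·exp(−(3/2)(1 − h/α)))`. -/
theorem max_at_pm_y0 (h α : ℝ) (hh : 0 ≤ h) (hαh : h < α)
    (φ : ℝ → ℝ) (hφ : ∀ y, φ y = Real.exp (-y ^ 2 / 2) / Real.sqrt (2 * π))
    (f : ℝ → ℝ) (hf : ∀ y, f y = (h + α / 3) / Real.sqrt (2 * π) + h * φ y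
      + (α / 3) * ((y ^ 2 - 1) * φ y))
    (y₀ : ℝ) (hy₀ : y₀ = Real.sqrt (3 - 3 * h / α)) :
    (∀ y : ℝ, f y ≤ f y₀) ∧
    (∀ y : ℝ, f y = f y₀ ↔ y = y₀ ∨ y = -y₀) ∧
    (⨆ y : ℝ, f y) =
      (1 / Real.sqrt (2 * π)) *
        (h + α / 3 + (2 * α / 3) * Real.exp (-(3 / 2) * (1 - h / α))) := by
  have hα : 0 < α := lt_of_le_of_lt hh hαh
  have hs : 0 < Real.sqrt (2 * π) := Real.sqrt_pos.2 (by positivity)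
  have ht₀ : 0 < 3 - 3 * h / α := by
    rw [sub_pos, div_lt_iff₀ hα]; linarith
  have hy₀sq : y₀ ^ 2 = 3 - 3 * h / α := by
    rw [hy₀, Real.sq_sqrt ht₀.le]
  have hA : α * y₀ ^ 2 = 3 * α - 3 * h := by
    rw [hy₀sq]; field_simp
  -- key elementary inequality
  have key : ∀ u : ℝ, (2 + u) * Real.exp (-(u / 2)) ≤ 2 := by
    intro u
    have h1 : u / 2 + 1 ≤ Real.exp (u / 2) := Real.add_one_le_exp _
    have h2 : 0 < Real.exp (-(u / 2)) := Real.exp_pos _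
    have h3 : Real.exp (u / 2) * Real.exp (-(u / 2)) = 1 := by
      rw [← Real.exp_add]; simp
    nlinarith [mul_le_mul_of_nonneg_right (by linarith : 2 + u ≤ 2 * Real.exp (u / 2)) h2.le]
  have keyS : ∀ u : ℝ, u ≠ 0 → (2 + u) * Real.exp (-(u / 2)) < 2 := by
    intro u hu
    have h1 : u / 2 + 1 < Real.exp (u / 2) := Real.add_one_lt_exp (by simpa using hu)
    have h2 : 0 < Real.exp (-(u / 2)) := Real.exp_pos _
    have h3 : Real.exp (u / 2) * Real.exp (-(u / 2)) = 1 := by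
      rw [← Real.exp_add]; simp
    nlinarith [mul_lt_mul_of_pos_right (by linarith : 2 + u < 2 * Real.exp (u / 2)) h2]
  -- main identity
  have main : ∀ y : ℝ, f y₀ - f y =
      α / 3 * Real.exp (-y₀ ^ 2 / 2) / Real.sqrt (2 * π) *
        (2 - (2 + (y ^ 2 - y₀ ^ 2)) * Real.exp (-((y ^ 2 - y₀ ^ 2) / 2))) := by
    intro y
    rw [hf y, hf y₀, hφ y, hφ y₀]
    rw [show (-y ^ 2 / 2 : ℝ) = -y₀ ^ 2 / 2 + -((y ^ 2 - y₀ ^ 2) / 2) by ring, Real.exp_add]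
    linear_combination (Real.exp (-y₀ ^ 2 / 2) *
      (1 - Real.exp (-((y ^ 2 - y₀ ^ 2) / 2))) / (3 * Real.sqrt (2 * π))) * hA
  have hle : ∀ y : ℝ, f y ≤ f y₀ := by
    intro y
    have hm := main y
    have hk := key (y ^ 2 - y₀ ^ 2)
    have hc : 0 ≤ α / 3 * Real.exp (-y₀ ^ 2 / 2) / Real.sqrt (2 * π) := by positivity
    nlinarith [mul_nonneg hc
      (by linarith : (0:ℝ) ≤ 2 - (2 + (y ^ 2 - y₀ ^ 2)) * Real.exp (-((y ^ 2 - y₀ ^ 2) / 2)))]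
  refine ⟨hle, fun y => ⟨?_, ?_⟩, ?_⟩
  · intro hEq
    by_contra hcon
    push_neg at hcon
    obtain ⟨h1, h2⟩ := hcon
    have hu : y ^ 2 - y₀ ^ 2 ≠ 0 := by
      intro h0
      have hfac : (y - y₀) * (y + y₀) = 0 := by linear_combination h0
      rcases mul_eq_zero.1 hfac with hc | hc
      · exact h1 (by linarith)
      · exact h2 (by linarith)
    have hk := keyS _ hu
    have hc : 0 < α / 3 * Real.exp (-y₀ ^ 2 / 2) / Real.sqrt (2 * π) := by positivity
    have hm := main y
    nlinarith [mul_pos hc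
      (by linarith : (0:ℝ) < 2 - (2 + (y ^ 2 - y₀ ^ 2)) * Real.exp (-((y ^ 2 - y₀ ^ 2) / 2)))]
  · intro hy
    have hsq : y ^ 2 = y₀ ^ 2 := by rcases hy with rfl | rfl <;> ring
    have hm := main y
    rw [hsq, sub_self] at hm
    simp at hm
    linarith
  · have hbdd : BddAbove (Set.range f) := ⟨f y₀, by rintro x ⟨y, rfl⟩; exact hle y⟩
    have hsup : (⨆ y : ℝ, f y) = f y₀ := le_antisymm (ciSup_le hle) (le_ciSup hbdd y₀)
    rw [hsup, hf y₀, hφ y₀, hy₀sq,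
      show (-(3 - 3 * h / α) / 2 : ℝ) = -(3 / 2) * (1 - h / α) by ring]
    field_simp
    ring
end

section
/- For every lattice law P on ℝ with 0 < β₃(P) < ∞, maximal span h = h(P), and standard deviation σ = σ(P), one has h ≤ 2β₃(P)/σ²(P), i.e., h·β₂(P) ≤ 2β₃(P), with equality if and only if P = (δ_x + δ_{x+h})/2 for some x ∈ ℝ. -/
open MeasureTheory ProbabilityTheory Real Set ENNReal

noncomputable def beta (s : ℝ) (P : Measure ℝ) : ℝ := ∫ x, |x - mu P| ^ s ∂P

/-- `P` is a lattice law: concentrated on some `a + ηℤ` with `η > 0`. -/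
def IsLattice (P : Measure ℝ) : Prop :=
  ∃ a η : ℝ, 0 < η ∧ P {x : ℝ | ∃ k : ℤ, x = a + η * k} = 1

/-- The maximal span of a lattice law. -/
noncomputable def latticeSpan (P : Measure ℝ) : ℝ :=
  sSup (⋃ a : ℝ, {η : ℝ | 0 < η ∧ P {x : ℝ | ∃ k : ℤ, x = a + η * k} = 1})

/-- Pointwise key lemma, case `t₀ ≥ 0`. -/
lemma keyA (h t₀ t : ℝ) (hh : 0 < h) (h0 : 0 ≤ t₀) (h1 : t₀ ≤ h / 2)
    (k : ℤ) (ht : t = t₀ + h * k) :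
    0 ≤ 2 * |t| ^ 3 - h * t ^ 2 + (t₀ * (h - 2 * t₀)) * t ∧
    (2 * |t| ^ 3 - h * t ^ 2 + (t₀ * (h - 2 * t₀)) * t = 0 →
      t = t₀ ∨ (t₀ = h / 2 ∧ t = -t₀)) := by
  rcases lt_trichotomy k 0 with hk | hk | hk
  · -- k ≤ -1, t ≤ t₀ - h < 0
    have hk1 : (k : ℝ) ≤ -1 := by exact_mod_cast (by omega : k ≤ -1)
    have htle : t ≤ t₀ - h := by nlinarith
    have htneg : t < 0 := by nlinarith
    have habs : |t| = -t := abs_of_neg htneg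
    rw [habs]
    have key : (-t) * (h - 2*t₀)^2 ≤ 2 * (-t) ^ 3 - h * t ^ 2 + (t₀ * (h - 2 * t₀)) * t := by
      nlinarith [sq_nonneg (t + h - t₀), mul_nonneg h0 (by nlinarith : (0:ℝ) ≤ h - 2*t₀)]
    constructor
    · nlinarith [sq_nonneg (h - 2*t₀)]
    · intro hz
      have h2 : (h - 2*t₀)^2 = 0 := by nlinarith [sq_nonneg (h - 2*t₀)]
      have ht0 : t₀ = h / 2 := by nlinarith
      right
      refine ⟨ht0, ?_⟩
      subst ht0
      have hfac : (-t)^2 * (2*(-t) - h) = 0 := by linear_combination hz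
      rcases mul_eq_zero.1 hfac with h4 | h4
      · have : -t = 0 := by
          have := pow_eq_zero_iff (n := 2) (by norm_num) |>.1 h4
          linarith
        linarith
      · linarith
  · subst hk
    constructor
    · simp only [Int.cast_zero, mul_zero, add_zero] at ht
      subst ht
      rw [abs_of_nonneg h0]; nlinarith
    · intro _; left; simp [ht]
  · -- k ≥ 1, t ≥ t₀ + h > 0
    have hk1 : (1 : ℝ) ≤ (k : ℝ) := by exact_mod_cast hk
    have htge : t₀ + h ≤ t := by nlinarith
    have htpos : 0 < t := by nlinarith
    have habs : |t| = t := abs_of_pos htpos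
    have hstrict : 0 < 2 * |t| ^ 3 - h * t ^ 2 + (t₀ * (h - 2 * t₀)) * t := by
      rw [habs]
      have h2t : 0 < 2 * t - h := by nlinarith
      nlinarith [mul_pos (mul_pos htpos htpos) h2t,
        mul_nonneg (mul_nonneg h0 (by nlinarith : (0:ℝ) ≤ h - 2*t₀)) htpos.le]
    exact ⟨hstrict.le, fun hz => absurd hz (by linarith)⟩

/-- Pointwise key lemma, general `|t₀| ≤ h/2`. -/
lemma keyB (h t₀ t : ℝ) (hh : 0 < h) (h1 : |t₀| ≤ h / 2)
    (k : ℤ) (ht : t = t₀ + h * k) :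
    0 ≤ 2 * |t| ^ 3 - h * t ^ 2 + (t₀ * (h - 2 * |t₀|)) * t ∧
    (2 * |t| ^ 3 - h * t ^ 2 + (t₀ * (h - 2 * |t₀|)) * t = 0 →
      t = t₀ ∨ (|t₀| = h / 2 ∧ t = -t₀)) := by
  rcases le_or_gt 0 t₀ with h0 | h0
  · rw [abs_of_nonneg h0] at *
    exact keyA h t₀ t hh h0 h1 k ht
  · rw [abs_of_neg h0] at *
    have := keyA h (-t₀) (-t) hh (by linarith) h1 (-k) (by push_cast; linarith)
    rw [abs_neg] at this
    constructor
    · nlinarith [this.1]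
    · intro hz
      rcases this.2 (by linarith) with h4 | h4
      · left; linarith
      · right; exact ⟨h4.1, by linarith [h4.2]⟩

lemma lat_countable (a η : ℝ) : ({x : ℝ | ∃ k : ℤ, x = a + η * k}).Countable := by
  have : {x : ℝ | ∃ k : ℤ, x = a + η * k} = Set.range (fun k : ℤ => a + η * k) := by
    ext x; simp [eq_comm]
  rw [this]; exact countable_range _

lemma structure_lemma (P : Measure ℝ) (hP : IsProbabilityMeasure P)
    (hlat : IsLattice P) (hnd : ∀ z : ℝ, P {z} ≠ 1) :
    ∃ d z₀ : ℝ, 0 < d ∧ P {x : ℝ | ∃ k : ℤ, x = z₀ + d * k} = 1 ∧ latticeSpan P = d := by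
  obtain ⟨a, η, hη, hL⟩ := hlat
  set A : Set ℝ := {z | P {z} ≠ 0} with hA
  have hAsub : ∀ a' η' : ℝ, P {x : ℝ | ∃ k : ℤ, x = a' + η' * k} = 1 →
      A ⊆ {x : ℝ | ∃ k : ℤ, x = a' + η' * k} := by
    intro a' η' hL' z hz
    by_contra hzL
    have hc : P {x : ℝ | ∃ k : ℤ, x = a' + η' * k}ᶜ = 0 :=
      (prob_compl_eq_zero_iff (lat_countable a' η').measurableSet).2 hL'
    exact hz (le_antisymm (le_trans (measure_mono (Set.singleton_subset_iff.2 hzL)) hc.le)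
      zero_le)
  have hAL : A ⊆ {x : ℝ | ∃ k : ℤ, x = a + η * k} := hAsub a η hL
  have hAc : A.Countable := (lat_countable a η).mono hAL
  have hA1 : P A = 1 := by
    have hLA : P ({x : ℝ | ∃ k : ℤ, x = a + η * k} \ A) = 0 := by
      have hc : ({x : ℝ | ∃ k : ℤ, x = a + η * k} \ A).Countable :=
        (lat_countable a η).mono Set.diff_subset
      have : {x : ℝ | ∃ k : ℤ, x = a + η * k} \ A = ⋃ z ∈ ({x : ℝ | ∃ k : ℤ, x = a + η * k} \ A), {z} := by
        ext x; simp
      rw [this, measure_biUnion_null_iff hc]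
      intro z hz
      have := hz.2
      simpa [hA] using this
    have h1 : (1 : ℝ≥0∞) ≤ P A := by
      calc (1:ℝ≥0∞) = P {x : ℝ | ∃ k : ℤ, x = a + η * k} := hL.symm
        _ ≤ P (A ∪ ({x : ℝ | ∃ k : ℤ, x = a + η * k} \ A)) := by
            apply measure_mono; intro x hx
            by_cases hxA : x ∈ A
            · exact Or.inl hxA
            · exact Or.inr ⟨hx, hxA⟩
        _ ≤ P A + P ({x : ℝ | ∃ k : ℤ, x = a + η * k} \ A) := measure_union_le _ _
        _ = P A := by rw [hLA, add_zero]
    exact le_antisymm prob_le_one h1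
  have hAne : A.Nonempty := by
    rcases Set.eq_empty_or_nonempty A with h | h
    · rw [h] at hA1; simp at hA1
    · exact h
  obtain ⟨z₀, hz₀⟩ := hAne
  have htwo : ∃ u ∈ A, u ≠ z₀ := by
    by_contra hcon
    push_neg at hcon
    have : A ⊆ {z₀} := fun u hu => hcon u hu
    have : (1:ℝ≥0∞) ≤ P {z₀} := hA1 ▸ measure_mono this
    exact hnd z₀ (le_antisymm prob_le_one this)
  obtain ⟨u, huA, huz⟩ := htwo
  set S : AddSubgroup ℝ := AddSubgroup.closure ((fun z => z - z₀) '' A) with hS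
  have hSle : ∀ a' η' : ℝ, P {x : ℝ | ∃ k : ℤ, x = a' + η' * k} = 1 →
      S ≤ AddSubgroup.zmultiples η' := by
    intro a' η' hL'
    rw [hS, AddSubgroup.closure_le]
    rintro _ ⟨z, hzA, rfl⟩
    obtain ⟨k, hk⟩ := hAsub a' η' hL' hzA
    obtain ⟨k₀, hk₀⟩ := hAsub a' η' hL' hz₀
    exact AddSubgroup.mem_zmultiples_iff.2 ⟨k - k₀, by push_cast [zsmul_eq_mul]; rw [hk, hk₀]; ring⟩
  have hnd' : ¬ Dense (S : Set ℝ) := by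
    intro hD
    obtain ⟨s, hsS, hs⟩ := hD.exists_mem_open isOpen_Ioo (Set.nonempty_Ioo.2 hη)
    obtain ⟨k, hk⟩ := AddSubgroup.mem_zmultiples_iff.1 (hSle a η hL hsS)
    rw [zsmul_eq_mul] at hk
    rcases hs with ⟨hs1, hs2⟩
    rw [← hk] at hs1 hs2
    have hk1 : (1:ℝ) ≤ (k:ℝ) := by
      have hkpos : 0 < k := by
        by_contra hc
        push_neg at hc
        have : (k:ℝ) ≤ 0 := by exact_mod_cast hc
        nlinarith
      exact_mod_cast hkpos
    nlinarith
  rcases S.dense_or_cyclic with hD | ⟨d₀, hd₀⟩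
  · exact absurd hD hnd'
  rw [← AddSubgroup.zmultiples_eq_closure] at hd₀
  have huS : u - z₀ ∈ S := AddSubgroup.subset_closure ⟨u, huA, rfl⟩
  have hd₀ne : d₀ ≠ 0 := by
    rintro rfl
    obtain ⟨k, hk⟩ := AddSubgroup.mem_zmultiples_iff.1 (hd₀ ▸ huS)
    simp at hk
    exact huz (by linarith [sub_eq_zero.1 hk.symm])
  obtain ⟨d, hd, hSd⟩ : ∃ d : ℝ, 0 < d ∧ S = AddSubgroup.zmultiples d := by
    rcases hd₀ne.lt_or_gt with hneg | hpos
    · refine ⟨-d₀, by linarith, ?_⟩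
      rw [hd₀]
      ext x
      simp only [AddSubgroup.mem_zmultiples_iff]
      constructor
      · rintro ⟨k, rfl⟩; exact ⟨-k, by simp⟩
      · rintro ⟨k, rfl⟩; exact ⟨-k, by simp⟩
    · exact ⟨d₀, hpos, hd₀⟩
  have hPd : P {x : ℝ | ∃ k : ℤ, x = z₀ + d * k} = 1 := by
    have hsub : A ⊆ {x : ℝ | ∃ k : ℤ, x = z₀ + d * k} := by
      intro z hzA
      have : z - z₀ ∈ S := AddSubgroup.subset_closure ⟨z, hzA, rfl⟩
      obtain ⟨k, hk⟩ := AddSubgroup.mem_zmultiples_iff.1 (hSd ▸ this)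
      rw [zsmul_eq_mul] at hk
      exact ⟨k, by linarith⟩
    exact le_antisymm prob_le_one (hA1 ▸ measure_mono hsub)
  refine ⟨d, z₀, hd, hPd, ?_⟩
  have hG : IsGreatest (⋃ a : ℝ, {η : ℝ | 0 < η ∧ P {x : ℝ | ∃ k : ℤ, x = a + η * k} = 1}) d := by
    constructor
    · exact Set.mem_iUnion.2 ⟨z₀, hd, hPd⟩
    · rintro η' hη'
      obtain ⟨a', hη'pos, hL'⟩ := Set.mem_iUnion.1 hη'
      obtain ⟨k, hk⟩ := AddSubgroup.mem_zmultiples_iff.1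
        (hSle a' η' hL' (hSd ▸ AddSubgroup.mem_zmultiples_iff.2 ⟨1, one_zsmul d⟩))
      rw [zsmul_eq_mul] at hk
      have hk1 : (1:ℝ) ≤ (k:ℝ) := by
        have : (0:ℝ) < (k:ℝ) * η' := hk ▸ hd
        have hkpos : 0 < k := by
          by_contra hc
          push_neg at hc
          have : (k:ℝ) ≤ 0 := by exact_mod_cast hc
          nlinarith
        exact_mod_cast hkpos
      nlinarith
  exact hG.csSup_eq

lemma rpow_two_abs (t : ℝ) : |t| ^ (2:ℝ) = t ^ 2 := by
  rw [show (2:ℝ) = ((2:ℕ):ℝ) by norm_num, Real.rpow_natCast, sq_abs]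

lemma rpow_three_abs (t : ℝ) : |t| ^ (3:ℝ) = |t| ^ (3:ℕ) := by
  rw [show (3:ℝ) = ((3:ℕ):ℝ) by norm_num, Real.rpow_natCast]

lemma ae_of_prob_one {P : Measure ℝ} [IsProbabilityMeasure P] {s : Set ℝ}
    (hs : MeasurableSet s) (h : P s = 1) : ∀ᵐ x ∂P, x ∈ s := by
  rw [ae_iff]
  exact (prob_compl_eq_zero_iff hs).2 h

lemma integral_two_point (x d : ℝ) (P : Measure ℝ)
    (hPx : P = (2⁻¹ : ℝ≥0∞) • (Measure.dirac x + Measure.dirac (x + d)))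
    (f : ℝ → ℝ) : ∫ y, f y ∂P = (f x + f (x + d)) / 2 := by
  have h1 : Integrable f (Measure.dirac x) :=
    (integrable_const (f x)).congr (ae_eq_dirac f).symm
  have h2 : Integrable f (Measure.dirac (x + d)) :=
    (integrable_const (f (x + d))).congr (ae_eq_dirac f).symm
  rw [hPx, integral_smul_measure, integral_add_measure h1 h2, integral_dirac, integral_dirac]
  simp [ENNReal.toReal_inv]
  ring

lemma two_point_values (x d : ℝ) (P : Measure ℝ)
    (hPx : P = (2⁻¹ : ℝ≥0∞) • (Measure.dirac x + Measure.dirac (x + d))) :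
    mu P = x + d / 2 ∧ beta 2 P = d ^ 2 / 4 ∧ beta 3 P = |d| ^ 3 / 8 := by
  have hmu : mu P = x + d / 2 := by
    rw [mu, integral_two_point x d P hPx]; ring
  refine ⟨hmu, ?_, ?_⟩
  · rw [_root_.beta, integral_two_point x d P hPx, hmu]
    rw [rpow_two_abs, rpow_two_abs]; ring
  · rw [_root_.beta, integral_two_point x d P hPx, hmu]
    rw [rpow_three_abs, rpow_three_abs]
    have h1 : |x - (x + d/2)| = |d|/2 := by
      rw [show x - (x+d/2) = -(d/2) by ring, abs_neg, abs_div]; norm_num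
    have h2 : |x + d - (x + d/2)| = |d|/2 := by
      rw [show x + d - (x+d/2) = d/2 by ring, abs_div]; norm_num
    rw [h1, h2]; ring

set_option maxHeartbeats 1000000 in
/-- for a lattice law `P` with `0 < β₃ < ∞` and maximal span `h`,
`h·β₂ ≤ 2β₃`, with equality iff `P = (δ_x + δ_{x+h})/2` for some `x ∈ ℝ`. -/
theorem span_beta_two_le (P : Measure ℝ) (hP : IsProbabilityMeasure P)
    (hlat : IsLattice P) (hInt : Integrable (fun x => |x| ^ 3) P) (hpos : 0 < beta 3 P) :
    latticeSpan P * beta 2 P ≤ 2 * beta 3 P ∧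
    (latticeSpan P * beta 2 P = 2 * beta 3 P ↔
      ∃ x : ℝ, P = (2⁻¹ : ℝ≥0∞) •
        (Measure.dirac x + Measure.dirac (x + latticeSpan P))) := by
  -- concentration at a point contradicts `0 < beta 3 P`
  have hbeta3 : ∀ z : ℝ, (∀ᵐ x ∂P, x = z) → False := by
    intro z hae
    have hmu : mu P = z := by
      rw [mu, integral_congr_ae (hae.mono fun x hx => hx : (fun x => x) =ᵐ[P] fun _ => z)]
      simp
    have hzero : beta 3 P = 0 := by
      rw [_root_.beta]
      have hc : (fun x => |x - mu P| ^ (3:ℝ)) =ᵐ[P] fun _ => 0 := by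
        filter_upwards [hae] with x hx
        rw [hx, hmu]
        simp
      rw [integral_congr_ae hc, integral_zero]
    linarith
  have hnd : ∀ z : ℝ, P {z} ≠ 1 := by
    intro z h1
    exact hbeta3 z (by
      have := ae_of_prob_one (measurableSet_singleton z) h1
      filter_upwards [this] with x hx using hx)
  obtain ⟨d, z₀, hd, hPd, hspan⟩ := structure_lemma P hP hlat hnd
  -- integrability
  have hInt3 : Integrable (fun x => |x - mu P| ^ (3:ℕ)) P := by
    refine Integrable.mono' ((hInt.const_mul 4).add (integrable_const (4 * |mu P| ^ 3)))
      (Measurable.aestronglyMeasurable (by measurability)) ?_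
    filter_upwards with x
    simp only [Pi.add_apply]
    have htr : |x - mu P| ≤ |x| + |mu P| := abs_sub _ _
    have h1 : |x - mu P| ^ 3 ≤ (|x| + |mu P|) ^ 3 :=
      pow_le_pow_left₀ (abs_nonneg _) htr 3
    have h2 : (|x| + |mu P|) ^ 3 ≤ 4 * |x| ^ 3 + 4 * |mu P| ^ 3 := by
      nlinarith [mul_nonneg (add_nonneg (abs_nonneg x) (abs_nonneg (mu P)))
        (sq_nonneg (|x| - |mu P|)), abs_nonneg x, abs_nonneg (mu P)]
    have h3 : ‖|x - mu P| ^ (3:ℕ)‖ = |x - mu P| ^ 3 := by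
      rw [Real.norm_eq_abs, abs_of_nonneg (pow_nonneg (abs_nonneg _) 3)]
    rw [h3]
    calc |x - mu P| ^ 3 ≤ 4 * |x| ^ 3 + 4 * |mu P| ^ 3 := le_trans h1 h2
      _ = 4 * |x| ^ 3 + 4 * |mu P| ^ 3 := rfl
  have hInt2 : Integrable (fun x => (x - mu P) ^ (2:ℕ)) P := by
    refine Integrable.mono' ((integrable_const (1:ℝ)).add hInt3)
      (Measurable.aestronglyMeasurable (by measurability)) ?_
    filter_upwards with x
    simp only [Pi.add_apply]
    have h3 : ‖(x - mu P) ^ (2:ℕ)‖ = |x - mu P| ^ 2 := by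
      rw [Real.norm_eq_abs, abs_pow]
    rw [h3]
    rcases le_total (|x - mu P|) 1 with hle | hle
    · have := abs_nonneg (x - mu P)
      nlinarith
    · have := abs_nonneg (x - mu P)
      nlinarith
  have hIntId : Integrable (fun x : ℝ => x) P := by
    refine Integrable.mono' ((integrable_const (1:ℝ)).add hInt)
      (Measurable.aestronglyMeasurable (by measurability)) ?_
    filter_upwards with x
    simp only [Pi.add_apply]
    rw [Real.norm_eq_abs]
    rcases le_total (|x|) 1 with hle | hle
    · have := abs_nonneg x
      nlinarith [pow_nonneg this 3]
    · have := abs_nonneg x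
      nlinarith [mul_le_mul_of_nonneg_left hle this,
        mul_le_mul_of_nonneg_left (mul_le_mul_of_nonneg_left hle this) this]
  have hIntSub : Integrable (fun x : ℝ => x - mu P) P := hIntId.sub (integrable_const _)
  have hmean : ∫ x, (x - mu P) ∂P = 0 := by
    rw [integral_sub hIntId (integrable_const _), integral_const]
    simp [mu]
  -- set up the key function
  set r : ℤ := round ((z₀ - mu P) / d) with hr
  set t₀ : ℝ := z₀ - mu P - d * r with ht₀
  have habs : |t₀| ≤ d / 2 := by
    have h1 : |(z₀ - mu P) / d - r| ≤ 1 / 2 := abs_sub_round _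
    have h2 : t₀ = d * ((z₀ - mu P) / d - r) := by
      rw [ht₀]; field_simp
    rw [h2, abs_mul, abs_of_pos hd]
    nlinarith [abs_nonneg ((z₀ - mu P) / d - (r:ℝ))]
  set c : ℝ := t₀ * (d - 2 * |t₀|) with hc
  set f : ℝ → ℝ := fun x =>
    2 * |x - mu P| ^ 3 - d * (x - mu P) ^ 2 + c * (x - mu P) with hf
  have haeL : ∀ᵐ x ∂P, x ∈ {x : ℝ | ∃ k : ℤ, x = z₀ + d * k} :=
    ae_of_prob_one (lat_countable z₀ d).measurableSet hPd
  have hkey : ∀ᵐ x ∂P, 0 ≤ f x ∧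
      (f x = 0 → x - mu P = t₀ ∨ (|t₀| = d / 2 ∧ x - mu P = -t₀)) := by
    filter_upwards [haeL] with x hx
    obtain ⟨k, hk⟩ := hx
    exact keyB d t₀ (x - mu P) hd habs (r + k)
      (by push_cast; rw [hk, ht₀]; ring)
  have hfInt : Integrable f P :=
    ((hInt3.const_mul 2).sub (hInt2.const_mul d)).add (hIntSub.const_mul c)
  have hbeta2 : beta 2 P = ∫ x, (x - mu P) ^ (2:ℕ) ∂P := by
    rw [_root_.beta]
    congr 1
    funext x
    rw [rpow_two_abs]
  have hbeta3eq : beta 3 P = ∫ x, |x - mu P| ^ (3:ℕ) ∂P := by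
    rw [_root_.beta]
    congr 1
    funext x
    rw [rpow_three_abs]
  have hI1 : Integrable (fun x => 2 * |x - mu P| ^ 3 - d * (x - mu P) ^ 2) P :=
    (hInt3.const_mul 2).sub (hInt2.const_mul d)
  have hI2 : Integrable (fun x => c * (x - mu P)) P := hIntSub.const_mul c
  have hI3 : Integrable (fun x => 2 * |x - mu P| ^ 3) P := hInt3.const_mul 2
  have hI4 : Integrable (fun x => d * (x - mu P) ^ 2) P := hInt2.const_mul d
  have hfval : ∫ x, f x ∂P = 2 * beta 3 P - d * beta 2 P := by
    simp only [hf]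
    rw [integral_add hI1 hI2, integral_sub hI3 hI4,
      integral_const_mul, integral_const_mul, integral_const_mul, hmean,
      hbeta2, hbeta3eq]
    ring
  have hge : 0 ≤ ∫ x, f x ∂P := integral_nonneg_of_ae (hkey.mono fun x hx => hx.1)
  rw [hspan]
  constructor
  · linarith [hfval ▸ hge]
  constructor
  · -- equality implies two-point
    intro heq
    have hint0 : ∫ x, f x ∂P = 0 := by rw [hfval]; linarith
    have hf0 : f =ᵐ[P] 0 :=
      (integral_eq_zero_iff_of_nonneg_ae (hkey.mono fun x hx => hx.1) hfInt).1 hint0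
    have hzero : ∀ᵐ x ∂P, x - mu P = t₀ ∨ (|t₀| = d / 2 ∧ x - mu P = -t₀) := by
      filter_upwards [hkey, hf0] with x hx h0
      exact hx.2 h0
    by_cases habs2 : |t₀| = d / 2
    · -- two-point case
      set u : ℝ := mu P - d / 2 with hu
      set v : ℝ := u + d with hv
      have huvne : u ≠ v := by
        rw [hv]; intro hcon
        have : d = 0 := by linarith
        exact absurd this (ne_of_gt hd)
      have huv : ∀ᵐ x ∂P, x ∈ ({u, v} : Set ℝ) := by
        filter_upwards [hzero] with x hx
        simp only [Set.mem_insert_iff, Set.mem_singleton_iff, hu, hv]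
        rcases (abs_eq (show (0:ℝ) ≤ d/2 by linarith)).1 habs2 with h | h
        · rcases hx with h1 | h1
          · right; linarith
          · left; linarith [h1.2]
        · rcases hx with h1 | h1
          · left; linarith
          · right; linarith [h1.2]
      have hmeasuv : MeasurableSet ({u, v} : Set ℝ) :=
        (measurableSet_singleton v).insert u
      have hPuv : P ({u, v} : Set ℝ) = 1 := by
        rw [← prob_compl_eq_zero_iff hmeasuv]
        rw [ae_iff] at huv
        exact huv
      -- mean determines the weights
      have hgid : (fun x : ℝ => x) =ᵐ[P]
          (fun x => u + d * Set.indicator {v} (fun _ => (1:ℝ)) x) := by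
        filter_upwards [huv] with x hx
        rcases hx with h1 | h1
        · subst h1
          rw [Set.indicator_of_notMem (by simpa using huvne)]
          ring
        · simp only [Set.mem_singleton_iff] at h1
          subst h1
          rw [Set.indicator_of_mem (Set.mem_singleton v)]
          rw [hv]; ring
      have hIndInt : Integrable (fun x => Set.indicator {v} (fun _ => (1:ℝ)) x) P :=
        (integrable_const (1:ℝ)).indicator (measurableSet_singleton v)
      have hmean2 : mu P = u + d * (P {v}).toReal := by
        rw [mu, integral_congr_ae hgid, integral_add (integrable_const u)
          (hIndInt.const_mul d), integral_const, integral_const_mul,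
          integral_indicator_const (1:ℝ) (measurableSet_singleton v)]
        simp [Measure.real]
      have hvhalf : (P {v}).toReal = 1 / 2 := by
        rw [hu] at hmean2
        have : d * (P {v}).toReal = d / 2 := by linarith
        field_simp at this
        nlinarith [this]
      have hPv : P {v} = 2⁻¹ := by
        have h1 : P {v} ≠ ⊤ := measure_ne_top P _
        have := (ENNReal.toReal_eq_toReal_iff' h1 (by norm_num : (2⁻¹ : ℝ≥0∞) ≠ ⊤)).1
        apply this
        rw [hvhalf]
        simp [ENNReal.toReal_inv]
      have hPu : P {u} = 2⁻¹ := by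
        have hsum : P {u} + P {v} = 1 := by
          rw [← measure_union (by simpa using huvne) (measurableSet_singleton v)]
          rw [Set.singleton_union]
          exact hPuv
        rw [hPv] at hsum
        have h2 : (2⁻¹ : ℝ≥0∞) + 2⁻¹ = 1 := ENNReal.inv_two_add_inv_two
        rw [← h2] at hsum
        exact WithTop.add_right_cancel (ENNReal.inv_ne_top.2 (by norm_num)) hsum
      refine ⟨u, ?_⟩
      ext s hs
      have hcompl : P ({u, v} : Set ℝ)ᶜ = 0 :=
        (prob_compl_eq_zero_iff hmeasuv).2 hPuv
      have hdiff : P (s \ {u, v}) = 0 :=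
        measure_mono_null (Set.diff_subset_compl s _) hcompl
      have hPs : P s = P (s ∩ {u, v}) := by
        rw [← measure_inter_add_diff s hmeasuv, hdiff, add_zero]
      rw [hPs]
      rw [Measure.smul_apply, Measure.add_apply,
        Measure.dirac_apply' _ hs, Measure.dirac_apply' _ hs, ← hv]
      by_cases hus : u ∈ s <;> by_cases hvs : v ∈ s
      · have : s ∩ {u, v} = {u, v} := by
          ext y; constructor
          · exact fun hy => hy.2
          · rintro (rfl | rfl)
            · exact ⟨hus, Or.inl rfl⟩
            · exact ⟨hvs, Or.inr rfl⟩
        rw [this, hPuv, Set.indicator_of_mem hus, Set.indicator_of_mem hvs]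
        simp only [Pi.one_apply, smul_eq_mul]
        rw [one_add_one_eq_two, ENNReal.inv_mul_cancel (by norm_num) (by norm_num)]
      · have : s ∩ {u, v} = {u} := by
          ext y; constructor
          · rintro ⟨hy, rfl | rfl⟩
            · rfl
            · exact absurd hy hvs
          · rintro rfl; exact ⟨hus, Or.inl rfl⟩
        rw [this, hPu, Set.indicator_of_mem hus, Set.indicator_of_notMem hvs]
        simp
      · have : s ∩ {u, v} = {v} := by
          ext y; constructor
          · rintro ⟨hy, rfl | rfl⟩
            · exact absurd hy hus
            · rfl
          · rintro rfl; exact ⟨hvs, Or.inr rfl⟩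
        rw [this, hPv, Set.indicator_of_notMem hus, Set.indicator_of_mem hvs]
        simp
      · have : s ∩ {u, v} = ∅ := by
          ext y
          simp only [Set.mem_inter_iff, Set.mem_empty_iff_false, iff_false]
          rintro ⟨hy, rfl | rfl⟩
          · exact hus hy
          · exact hvs hy
        rw [this, Set.indicator_of_notMem hus, Set.indicator_of_notMem hvs]
        simp
    · -- interior case: contradiction
      exfalso
      apply hbeta3 (mu P + t₀)
      filter_upwards [hzero] with x hx
      rcases hx with h1 | h1
      · linarith
      · exact absurd h1.1 habs2
  · -- converse
    rintro ⟨x, hPx⟩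
    obtain ⟨hmu, h2, h3⟩ := two_point_values x d P hPx
    rw [h2, h3, abs_of_pos hd]
    ring
end
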